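/- arXiv:1511.02723 — 7 statements merged into one kernel-verified Lean document; each statement's English description precedes it below -/
import Mathlib

section
/- Let {X_k}_{k≥1} be centred random variables with E[X_k²] ≤ 1, and let {φ_k}_{k≥1} be a non-increasing sequence of non-negative reals such that for all i < j < k < l: |Cov(X_i, X_j X_k X_l)| ≤ φ_{j−i}, |Cov(X_i X_j X_k, X_l)| ≤ φ_{l−k}, |Cov(X_i X_j, X_k X_l)| ≤ φ_{k−j}, and |Cov(X_i, X_j)| ≤ φ_{j−i}. Then for all i < j < k < l, |Cov(X_i X_j, X_k X_l)| ≤ 2·min{φ_{j−i}, φ_{k−j}, φ_{l−k}}. -/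
open MeasureTheory
open scoped BigOperators

/-- Covariance of two real random variables: `Cov(f,g) = E[fg] - E[f]E[g]`. -/
noncomputable def cov {Ω : Type*} [MeasurableSpace Ω] (μ : Measure Ω) (f g : Ω → ℝ) : ℝ :=
  (∫ ω, f ω * g ω ∂μ) - (∫ ω, f ω ∂μ) * (∫ ω, g ω ∂μ)

private lemma ennreal_half : (1:ENNReal)/2 = 1/4 + 1/4 := by
  simp only [one_div]
  rw [← two_mul]
  rw [show (4:ENNReal) = 2*2 by norm_num, ENNReal.mul_inv (by norm_num) (by norm_num)]
  rw [← mul_assoc, ENNReal.mul_inv_cancel (by norm_num) (by norm_num), one_mul]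

private lemma ennreal_one : (1:ENNReal)⁻¹ = 2⁻¹ + 2⁻¹ := by
  simp [← two_mul, ENNReal.mul_inv_cancel]

/-- Under the covariance conditions of the paper, for all `i < j < k < l`,
`|Cov(X_i X_j, X_k X_l)| ≤ 2 min{φ_{j−i}, φ_{k−j}, φ_{l−k}}`. -/
theorem abs_cov_pair_products_le {Ω : Type*} [MeasurableSpace Ω]
    (μ : Measure Ω) [IsProbabilityMeasure μ] (X : ℕ → Ω → ℝ) (φ : ℕ → ℝ)
    (hL4 : ∀ k, MemLp (X k) 4 μ)
    (hcent : ∀ k, ∫ ω, X k ω ∂μ = 0)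
    (hvar : ∀ k, ∫ ω, (X k ω) ^ 2 ∂μ ≤ 1)
    (hφ : ∀ k, 0 ≤ φ k)
    (hmono : ∀ k l : ℕ, 1 ≤ k → k ≤ l → φ l ≤ φ k)
    (hcov : ∀ i j k l : ℕ, i < j → j < k → k < l →
      |cov μ (X i) (fun ω => X j ω * X k ω * X l ω)| ≤ φ (j - i) ∧
      |cov μ (fun ω => X i ω * X j ω * X k ω) (X l)| ≤ φ (l - k) ∧
      |cov μ (fun ω => X i ω * X j ω) (fun ω => X k ω * X l ω)| ≤ φ (k - j) ∧
      |cov μ (X i) (X j)| ≤ φ (j - i)) :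
    ∀ i j k l : ℕ, i < j → j < k → k < l →
      |cov μ (fun ω => X i ω * X j ω) (fun ω => X k ω * X l ω)| ≤
        2 * min (φ (j - i)) (min (φ (k - j)) (φ (l - k))) := by
  intro i j k l hij hjk hkl
  -- basic integrability
  have h2 : ∀ m, MemLp (X m) 2 μ := fun m => (hL4 m).mono_exponent (by norm_num)
  have hmul2 : ∀ m n, MemLp (fun ω => X m ω * X n ω) 2 μ := fun m n => by
    have := (hL4 n).smul (hL4 m) (r := 2) (hpqr := ⟨by simpa only [one_div] using ennreal_half.symm⟩)
    exact this
  have hmulint : ∀ m n, Integrable (fun ω => X m ω * X n ω) μ :=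
    fun m n => (hmul2 m n).integrable (by norm_num)
  -- one-bound on second moments of products, via Cauchy-Schwarz (AM-GM form)
  have habs1 : ∀ m n, |∫ ω, X m ω * X n ω ∂μ| ≤ 1 := by
    intro m n
    have step1 : |∫ ω, X m ω * X n ω ∂μ| ≤ ∫ ω, |X m ω * X n ω| ∂μ := by
      simpa [abs_mul] using norm_integral_le_integral_norm (fun ω => X m ω * X n ω) (μ := μ)
    have hintsq : Integrable (fun ω => ((X m ω) ^ 2 + (X n ω) ^ 2) / 2) μ :=
      ((h2 m).integrable_sq.add (h2 n).integrable_sq).div_const 2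
    have step2 : ∫ ω, |X m ω * X n ω| ∂μ ≤ ∫ ω, ((X m ω) ^ 2 + (X n ω) ^ 2) / 2 ∂μ := by
      refine integral_mono (hmulint m n).abs hintsq fun ω => ?_
      have h1 := abs_mul (X m ω) (X n ω)
      nlinarith [sq_nonneg (|X m ω| - |X n ω|), sq_abs (X m ω), sq_abs (X n ω),
        abs_nonneg (X m ω), abs_nonneg (X n ω)]
    have step3 : ∫ ω, ((X m ω) ^ 2 + (X n ω) ^ 2) / 2 ∂μ ≤ 1 := by
      rw [integral_div, integral_add (h2 m).integrable_sq (h2 n).integrable_sq]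
      linarith [hvar m, hvar n]
    linarith
  -- key quantities
  set C := ∫ ω, X i ω * X j ω * (X k ω * X l ω) ∂μ with hC
  set A := ∫ ω, X i ω * X j ω ∂μ with hA
  set B := ∫ ω, X k ω * X l ω ∂μ with hB
  obtain ⟨h1, h2', h3, _⟩ := hcov i j k l hij hjk hkl
  -- |C| ≤ φ (j - i)
  have hC1 : |C| ≤ φ (j - i) := by
    have : cov μ (X i) (fun ω => X j ω * X k ω * X l ω) = C := by
      simp only [cov, hcent i, zero_mul, sub_zero, hC]
      congr 1
      funext ω
      ring
    rwa [this] at h1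
  -- |C| ≤ φ (l - k)
  have hC2 : |C| ≤ φ (l - k) := by
    have : cov μ (fun ω => X i ω * X j ω * X k ω) (X l) = C := by
      simp only [cov, hcent l, mul_zero, sub_zero, hC]
      congr 1
      funext ω
      ring
    rwa [this] at h2'
  -- |A| ≤ φ (j - i)
  have hA1 : |A| ≤ φ (j - i) := by
    obtain ⟨_, _, _, h4⟩ := hcov i j (j + 1) (j + 2) hij (by omega) (by omega)
    have : cov μ (X i) (X j) = A := by
      simp [cov, hcent i, hA]
    rwa [this] at h4
  -- |B| ≤ φ (l - k)
  have hB1 : |B| ≤ φ (l - k) := by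
    obtain ⟨_, _, _, h4⟩ := hcov k l (l + 1) (l + 2) hkl (by omega) (by omega)
    have : cov μ (X k) (X l) = B := by
      simp [cov, hcent k, hB]
    rwa [this] at h4
  have hcovE : cov μ (fun ω => X i ω * X j ω) (fun ω => X k ω * X l ω) = C - A * B := rfl
  -- three bounds
  have hb1 : |cov μ (fun ω => X i ω * X j ω) (fun ω => X k ω * X l ω)| ≤ 2 * φ (j - i) := by
    rw [hcovE]
    have h := abs_sub C (A * B)
    rw [abs_mul] at h
    nlinarith [habs1 k l, abs_nonneg A, abs_nonneg B, hφ (j - i), hA1, hC1]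
  have hb3 : |cov μ (fun ω => X i ω * X j ω) (fun ω => X k ω * X l ω)| ≤ 2 * φ (l - k) := by
    rw [hcovE]
    have h := abs_sub C (A * B)
    rw [abs_mul] at h
    nlinarith [habs1 i j, abs_nonneg A, abs_nonneg B, hφ (l - k), hB1, hC2]
  have hb2 : |cov μ (fun ω => X i ω * X j ω) (fun ω => X k ω * X l ω)| ≤ 2 * φ (k - j) := by
    calc _ ≤ φ (k - j) := h3
      _ ≤ 2 * φ (k - j) := by linarith [hφ (k - j)]
  rw [mul_min_of_nonneg _ _ (by norm_num : (0:ℝ) ≤ 2),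
    mul_min_of_nonneg _ _ (by norm_num : (0:ℝ) ≤ 2)]
  exact le_min hb1 (le_min hb2 hb3)
end

section
/- Let {X_k}_{k≥1} be centred random variables with E[X_k²] ≤ 1, and let {φ_k}_{k≥1} be a non-increasing sequence of non-negative reals such that for all i < j < k < l: |Cov(X_i, X_j X_k X_l)| ≤ φ_{j−i}, |Cov(X_i X_j X_k, X_l)| ≤ φ_{l−k}, |Cov(X_i X_j, X_k X_l)| ≤ φ_{k−j}, and |Cov(X_i, X_j)| ≤ φ_{j−i}. Then for all i < j < k < l, both |Cov(X_i X_k, X_j X_l)| ≤ 2·min{φ_{j−i}, φ_{l−k}} and |Cov(X_i X_l, X_j X_k)| ≤ 2·min{φ_{j−i}, φ_{l−k}}. -/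
open MeasureTheory
open scoped BigOperators

/-- Under the covariance conditions of the paper, for all `i < j < k < l`, both
`|Cov(X_i X_k, X_j X_l)| ≤ 2 min{φ_{j−i}, φ_{l−k}}` and
`|Cov(X_i X_l, X_j X_k)| ≤ 2 min{φ_{j−i}, φ_{l−k}}`. -/
theorem abs_cov_crossed_products_le {Ω : Type*} [MeasurableSpace Ω]
    (μ : Measure Ω) [IsProbabilityMeasure μ] (X : ℕ → Ω → ℝ) (φ : ℕ → ℝ)
    (hL4 : ∀ k, MemLp (X k) 4 μ)
    (hcent : ∀ k, ∫ ω, X k ω ∂μ = 0)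
    (hvar : ∀ k, ∫ ω, (X k ω) ^ 2 ∂μ ≤ 1)
    (hφ : ∀ k, 0 ≤ φ k)
    (hmono : ∀ k l : ℕ, 1 ≤ k → k ≤ l → φ l ≤ φ k)
    (hcov : ∀ i j k l : ℕ, i < j → j < k → k < l →
      |cov μ (X i) (fun ω => X j ω * X k ω * X l ω)| ≤ φ (j - i) ∧
      |cov μ (fun ω => X i ω * X j ω * X k ω) (X l)| ≤ φ (l - k) ∧
      |cov μ (fun ω => X i ω * X j ω) (fun ω => X k ω * X l ω)| ≤ φ (k - j) ∧
      |cov μ (X i) (X j)| ≤ φ (j - i)) :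
    ∀ i j k l : ℕ, i < j → j < k → k < l →
      |cov μ (fun ω => X i ω * X k ω) (fun ω => X j ω * X l ω)| ≤
          2 * min (φ (j - i)) (φ (l - k)) ∧
      |cov μ (fun ω => X i ω * X l ω) (fun ω => X j ω * X k ω)| ≤
          2 * min (φ (j - i)) (φ (l - k)) := by
  intro i j k l hij hjk hkl
  -- pair expectations are bounded by 1 (Cauchy-Schwarz)
  have hm2 : ∀ a, MemLp (X a) (ENNReal.ofReal 2) μ := by
    intro a
    have : (ENNReal.ofReal 2) = (2 : ENNReal) := by
      norm_num
    rw [this]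
    exact (hL4 a).mono_exponent (by norm_num)
  have hconj : (2 : ℝ).HolderConjugate 2 := Real.holderConjugate_iff.mpr ⟨by norm_num, by norm_num⟩
  have hpair1 : ∀ a b : ℕ, |∫ ω, X a ω * X b ω ∂μ| ≤ 1 := by
    intro a b
    have h1 : |∫ ω, X a ω * X b ω ∂μ| ≤ ∫ ω, ‖X a ω‖ * ‖X b ω‖ ∂μ := by
      have h := norm_integral_le_integral_norm (μ := μ) (fun ω => X a ω * X b ω)
      simpa [Real.norm_eq_abs, abs_mul] using h
    have h2 := integral_mul_norm_le_Lp_mul_Lq hconj (hm2 a) (hm2 b)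
    have hsq : ∀ c : ℕ, (∫ ω, ‖X c ω‖ ^ (2:ℝ) ∂μ) = ∫ ω, (X c ω) ^ 2 ∂μ := by
      intro c; congr 1; funext ω
      rw [show ((2:ℝ)) = ((2:ℕ) : ℝ) by norm_num, Real.rpow_natCast]
      simp [sq_abs]
    have hnn : ∀ c : ℕ, 0 ≤ ∫ ω, (X c ω) ^ 2 ∂μ := fun c =>
      integral_nonneg fun ω => sq_nonneg _
    have hle1 : ∀ c : ℕ, (∫ ω, ‖X c ω‖ ^ (2:ℝ) ∂μ) ^ ((1:ℝ)/2) ≤ 1 := by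
      intro c
      rw [hsq c]
      exact Real.rpow_le_one (hnn c) (hvar c) (by norm_num)
    have hnn' : ∀ c : ℕ, (0:ℝ) ≤ (∫ ω, ‖X c ω‖ ^ (2:ℝ) ∂μ) ^ ((1:ℝ)/2) := by
      intro c
      exact Real.rpow_nonneg (by rw [hsq c]; exact hnn c) _
    calc |∫ ω, X a ω * X b ω ∂μ| ≤ ∫ ω, ‖X a ω‖ * ‖X b ω‖ ∂μ := h1
      _ ≤ (∫ ω, ‖X a ω‖ ^ (2:ℝ) ∂μ) ^ ((1:ℝ)/2) * (∫ ω, ‖X b ω‖ ^ (2:ℝ) ∂μ) ^ ((1:ℝ)/2) := h2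
      _ ≤ 1 * 1 := mul_le_mul (hle1 a) (hle1 b) (hnn' b) zero_le_one
      _ = 1 := by norm_num
  -- pair expectations are bounded by φ
  have hpairφ : ∀ a b : ℕ, a < b → |∫ ω, X a ω * X b ω ∂μ| ≤ φ (b - a) := by
    intro a b hab
    have h := (hcov a b (b+1) (b+2) hab (by omega) (by omega)).2.2.2
    simpa [cov, hcent a] using h
  -- the fourth moment is bounded by both φ (j-i) and φ (l-k)
  set A : ℝ := ∫ ω, X i ω * X j ω * X k ω * X l ω ∂μ with hA
  have hA1 : |A| ≤ φ (j - i) := by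
    have h := (hcov i j k l hij hjk hkl).1
    have he : cov μ (X i) (fun ω => X j ω * X k ω * X l ω) = A := by
      simp only [cov, hcent i, zero_mul, sub_zero, hA]
      congr 1; funext ω; ring
    rwa [he] at h
  have hA2 : |A| ≤ φ (l - k) := by
    have h := (hcov i j k l hij hjk hkl).2.1
    have he : cov μ (fun ω => X i ω * X j ω * X k ω) (X l) = A := by
      simp only [cov, hcent l, mul_zero, sub_zero, hA]
    rwa [he] at h
  have h1ji : 1 ≤ j - i := by omega
  have h1lk : 1 ≤ l - k := by omega
  have hφmin : 0 ≤ min (φ (j - i)) (φ (l - k)) := le_min (hφ _) (hφ _)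
  constructor
  · -- Cov(X_i X_k, X_j X_l)
    have he : cov μ (fun ω => X i ω * X k ω) (fun ω => X j ω * X l ω) =
        A - (∫ ω, X i ω * X k ω ∂μ) * (∫ ω, X j ω * X l ω ∂μ) := by
      simp only [cov, hA]
      congr 2; funext ω; ring
    rw [he]
    have hb : |A - (∫ ω, X i ω * X k ω ∂μ) * (∫ ω, X j ω * X l ω ∂μ)| ≤
        |A| + |∫ ω, X i ω * X k ω ∂μ| * |∫ ω, X j ω * X l ω ∂μ| := by
      refine (abs_sub _ _).trans ?_
      rw [abs_mul]
    refine hb.trans ?_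
    rw [two_mul]
    rcases le_total (φ (j - i)) (φ (l - k)) with hc | hc
    · rw [min_eq_left hc]
      have h2 : |∫ ω, X i ω * X k ω ∂μ| * |∫ ω, X j ω * X l ω ∂μ| ≤ φ (j - i) := by
        calc |∫ ω, X i ω * X k ω ∂μ| * |∫ ω, X j ω * X l ω ∂μ|
            ≤ φ (k - i) * 1 := mul_le_mul (hpairφ i k (by omega)) (hpair1 j l)
              (abs_nonneg _) (hφ _)
          _ = φ (k - i) := mul_one _
          _ ≤ φ (j - i) := hmono _ _ h1ji (by omega)
      exact add_le_add hA1 h2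
    · rw [min_eq_right hc]
      have h2 : |∫ ω, X i ω * X k ω ∂μ| * |∫ ω, X j ω * X l ω ∂μ| ≤ φ (l - k) := by
        calc |∫ ω, X i ω * X k ω ∂μ| * |∫ ω, X j ω * X l ω ∂μ|
            ≤ 1 * φ (l - j) := mul_le_mul (hpair1 i k) (hpairφ j l (by omega))
              (abs_nonneg _) zero_le_one
          _ = φ (l - j) := one_mul _
          _ ≤ φ (l - k) := hmono _ _ h1lk (by omega)
      exact add_le_add hA2 h2
  · -- Cov(X_i X_l, X_j X_k)
    have he : cov μ (fun ω => X i ω * X l ω) (fun ω => X j ω * X k ω) =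
        A - (∫ ω, X i ω * X l ω ∂μ) * (∫ ω, X j ω * X k ω ∂μ) := by
      simp only [cov, hA]
      congr 2; funext ω; ring
    rw [he]
    have hb : |A - (∫ ω, X i ω * X l ω ∂μ) * (∫ ω, X j ω * X k ω ∂μ)| ≤
        |A| + |∫ ω, X i ω * X l ω ∂μ| * |∫ ω, X j ω * X k ω ∂μ| := by
      refine (abs_sub _ _).trans ?_
      rw [abs_mul]
    refine hb.trans ?_
    rw [two_mul]
    have h2 : ∀ m : ℕ, 1 ≤ m → m ≤ l - i →
        |∫ ω, X i ω * X l ω ∂μ| * |∫ ω, X j ω * X k ω ∂μ| ≤ φ m := by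
      intro m hm1 hm2
      calc |∫ ω, X i ω * X l ω ∂μ| * |∫ ω, X j ω * X k ω ∂μ|
          ≤ φ (l - i) * 1 := mul_le_mul (hpairφ i l (by omega)) (hpair1 j k)
            (abs_nonneg _) (hφ _)
        _ = φ (l - i) := mul_one _
        _ ≤ φ m := hmono _ _ hm1 hm2
    rcases le_total (φ (j - i)) (φ (l - k)) with hc | hc
    · rw [min_eq_left hc]
      exact add_le_add hA1 (h2 (j - i) h1ji (by omega))
    · rw [min_eq_right hc]
      exact add_le_add hA2 (h2 (l - k) h1lk (by omega))
end

section
/- Let {X_k}_{k≥1} be random variables with E[X_k²] ≤ 1 and Φ₀ = sup_k E[X_k⁴] < ∞, and let {ψ_k}_{k≥1} be non-negative reals with Φ₂ = Σ_{k=1}^∞ ψ_k < ∞ such that Cov(X_i², X_j²) ≤ ψ_{j−i} for all i < j. Then for every p ≥ 1 and all non-negative reals d_1, …, d_p, Var(Σ_{i=1}^p d_i X_i²) ≤ 2(Φ₀ + Φ₂)·Σ_{i=1}^p d_i². -/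
open MeasureTheory
open scoped BigOperators

/-- Variance of a real random variable: `Var(f) = E[f²] - (E[f])²`. -/
noncomputable def variance' {Ω : Type*} [MeasurableSpace Ω] (μ : Measure Ω) (f : Ω → ℝ) : ℝ :=
  (∫ ω, (f ω) ^ 2 ∂μ) - (∫ ω, f ω ∂μ) ^ 2

private lemma cov_comm' {Ω : Type*} [MeasurableSpace Ω] (μ : Measure Ω) (f g : Ω → ℝ) :
    cov μ f g = cov μ g f := by
  simp [cov, mul_comm]

/-- Bilinear expansion of the variance of a finite linear combination. -/
private lemma variance'_sum_expand {Ω : Type*} [MeasurableSpace Ω] (μ : Measure Ω)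
    [IsProbabilityMeasure μ] {p : ℕ} (d : Fin p → ℝ) (F : Fin p → Ω → ℝ)
    (hFi : ∀ i, Integrable (F i) μ)
    (hFij : ∀ i j, Integrable (fun ω => F i ω * F j ω) μ) :
    variance' μ (fun ω => ∑ i, d i * F i ω)
      = ∑ i, ∑ j, d i * d j * cov μ (F i) (F j) := by
  have h1 : (∫ ω, (∑ i, d i * F i ω) ∂μ) = ∑ i, d i * ∫ ω, F i ω ∂μ := by
    rw [integral_finset_sum _ (fun i _ => (hFi i).const_mul _)]
    exact Finset.sum_congr rfl fun i _ => integral_const_mul _ _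
  have hsq : ∀ ω, (∑ i, d i * F i ω) ^ 2
      = ∑ i, ∑ j, (d i * d j) * (F i ω * F j ω) := by
    intro ω
    rw [sq, Finset.sum_mul_sum]
    exact Finset.sum_congr rfl fun i _ => Finset.sum_congr rfl fun j _ => by ring
  have h2 : (∫ ω, (∑ i, d i * F i ω) ^ 2 ∂μ)
      = ∑ i, ∑ j, d i * d j * ∫ ω, F i ω * F j ω ∂μ := by
    simp_rw [hsq]
    rw [integral_finset_sum _ (fun i _ =>
      integrable_finset_sum _ (fun j _ => (hFij i j).const_mul _))]
    refine Finset.sum_congr rfl fun i _ => ?_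
    rw [integral_finset_sum _ (fun j _ => (hFij i j).const_mul _)]
    exact Finset.sum_congr rfl fun j _ => integral_const_mul _ _
  have h3 : (∑ i, d i * ∫ ω, F i ω ∂μ) ^ 2
      = ∑ i, ∑ j, (d i * ∫ ω, F i ω ∂μ) * (d j * ∫ ω, F j ω ∂μ) := by
    rw [sq, Finset.sum_mul_sum]
  unfold variance'
  rw [h1, h2, h3, ← Finset.sum_sub_distrib]
  refine Finset.sum_congr rfl fun i _ => ?_
  rw [← Finset.sum_sub_distrib]
  refine Finset.sum_congr rfl fun j _ => ?_
  unfold cov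
  ring

/-- For random variables with `E[X_k²] ≤ 1`, fourth moments bounded by `Φ₀`, and
`Cov(X_i², X_j²) ≤ ψ_{j−i}` with `Φ₂ = Σ_{k≥1} ψ_k < ∞`, for all non-negative `d_1, …, d_p`:
`Var(Σ dᵢ Xᵢ²) ≤ 2 (Φ₀ + Φ₂) Σ dᵢ²`. -/
theorem variance_diagonal_quadratic_form {Ω : Type*} [MeasurableSpace Ω]
    (μ : Measure Ω) [IsProbabilityMeasure μ] (X : ℕ → Ω → ℝ) (ψ : ℕ → ℝ) (Φ₀ : ℝ)
    (hL4 : ∀ k, MemLp (X k) 4 μ)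
    (hvar : ∀ k, ∫ ω, (X k ω) ^ 2 ∂μ ≤ 1)
    (hΦ₀ : ∀ k, ∫ ω, (X k ω) ^ 4 ∂μ ≤ Φ₀)
    (hψ : ∀ k, 0 ≤ ψ k)
    (hψsum : Summable (fun k : ℕ => ψ (k + 1)))
    (hcov : ∀ i j : ℕ, i < j →
      cov μ (fun ω => (X i ω) ^ 2) (fun ω => (X j ω) ^ 2) ≤ ψ (j - i)) :
    ∀ (p : ℕ) (d : Fin p → ℝ), 1 ≤ p → (∀ i, 0 ≤ d i) →
      variance' μ (fun ω => ∑ i, d i * (X i ω) ^ 2) ≤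
        2 * (Φ₀ + ∑' k : ℕ, ψ (k + 1)) * ∑ i, (d i) ^ 2 := by
  intro p d hp hd
  set Φ₂ : ℝ := ∑' k : ℕ, ψ (k + 1) with hΦ₂def
  have hΦ₂0 : 0 ≤ Φ₂ := tsum_nonneg fun k => hψ _
  have hΦ₀0 : 0 ≤ Φ₀ :=
    le_trans (integral_nonneg fun ω => by positivity) (hΦ₀ 0)
  set F : ℕ → Ω → ℝ := fun k ω => X k ω ^ 2 with hFdef
  have hF2 : ∀ k, MemLp (F k) 2 μ := by
    intro k
    have harith : (1:ENNReal)/2 = 1/4 + 1/4 := by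
      rw [ENNReal.div_add_div_same, show (4:ENNReal) = 2*2 by norm_num,
        ENNReal.div_eq_div_iff (by norm_num) (by norm_num) (by norm_num) (by norm_num)]
      norm_num
    have h := MemLp.smul (𝕜 := ℝ) (hL4 k) (hL4 k) (p := 4) (q := 4) (r := 2)
        (hpqr := ⟨by simp only [← one_div]; exact harith.symm⟩)
    have hfe : X k • X k = F k := by funext ω; simp [hFdef, smul_eq_mul, sq]
    rw [← hfe]; exact h
  have hFi : ∀ k, Integrable (F k) μ :=
    fun k => (hF2 k).integrable (by norm_num)
  have hFij : ∀ i j : ℕ, Integrable (fun ω => F i ω * F j ω) μ := by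
    intro i j
    have h := MemLp.smul (𝕜 := ℝ) (hF2 j) (hF2 i) (p := 2) (q := 2) (r := 1)
      (hpqr := ⟨by simp [ENNReal.inv_two_add_inv_two]⟩)
    have h' := h.integrable le_rfl
    exact (by simpa [Pi.smul_apply, smul_eq_mul] using h' : Integrable (F i * F j) μ)
  -- weights
  set w : Fin p → Fin p → ℝ := fun i j =>
    if i = j then Φ₀ else ψ (max (i:ℕ) (j:ℕ) - min (i:ℕ) (j:ℕ)) with hwdef
  have hw_symm : ∀ i j, w i j = w j i := by
    intro i j
    by_cases h : i = j
    · simp [hwdef, h]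
    · simp [hwdef, h, Ne.symm h, max_comm, min_comm]
  have hw_nonneg : ∀ i j, 0 ≤ w i j := by
    intro i j
    by_cases h : i = j <;> simp [hwdef, h, hΦ₀0, hψ]
  have hcovw : ∀ i j : Fin p, cov μ (F i) (F j) ≤ w i j := by
    intro i j
    by_cases h : i = j
    · subst h
      have h4 : (fun ω => F i ω * F i ω) = fun ω => X i ω ^ 4 := by
        funext ω; simp only [hFdef]; ring
      have : cov μ (F i) (F i) ≤ ∫ ω, F i ω * F i ω ∂μ := by
        unfold cov
        have := sq_nonneg (∫ ω, F i ω ∂μ)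
        nlinarith
      calc cov μ (F i) (F i) ≤ ∫ ω, F i ω * F i ω ∂μ := this
        _ = ∫ ω, X (i:ℕ) ω ^ 4 ∂μ := by rw [h4]
        _ ≤ Φ₀ := hΦ₀ _
        _ = w i i := by simp [hwdef]
    · have hij : (i:ℕ) ≠ (j:ℕ) := fun hh => h (Fin.ext hh)
      rcases lt_or_gt_of_ne hij with hlt | hgt
      · have := hcov i j hlt
        have hmax : max (i:ℕ) (j:ℕ) = (j:ℕ) := max_eq_right hlt.le
        have hmin : min (i:ℕ) (j:ℕ) = (i:ℕ) := min_eq_left hlt.le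
        simpa [hwdef, h, hmax, hmin, hFdef] using this
      · have := hcov j i hgt
        have hmax : max (i:ℕ) (j:ℕ) = (i:ℕ) := max_eq_left hgt.le
        have hmin : min (i:ℕ) (j:ℕ) = (j:ℕ) := min_eq_right hgt.le
        rw [cov_comm']
        simpa [hwdef, h, hmax, hmin, hFdef] using this
  -- termwise bound
  have key : (∑ i, ∑ j, d i * d j * cov μ (F i) (F j))
      ≤ ∑ i, ∑ j, ((d i)^2 + (d j)^2)/2 * w i j := by
    refine Finset.sum_le_sum fun i _ => Finset.sum_le_sum fun j _ => ?_
    have h1 : d i * d j * cov μ (F i) (F j) ≤ d i * d j * w i j :=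
      mul_le_mul_of_nonneg_left (hcovw i j) (mul_nonneg (hd i) (hd j))
    have h2 : d i * d j ≤ ((d i)^2 + (d j)^2)/2 := by nlinarith [sq_nonneg (d i - d j)]
    have h3 : d i * d j * w i j ≤ ((d i)^2 + (d j)^2)/2 * w i j :=
      mul_le_mul_of_nonneg_right h2 (hw_nonneg i j)
    linarith
  -- symmetrization
  have symm : (∑ i, ∑ j, ((d i)^2 + (d j)^2)/2 * w i j)
      = ∑ i, ∑ j, (d i)^2 * w i j := by
    have hc : (∑ i, ∑ j, (d j)^2 * w i j) = ∑ i, ∑ j, (d i)^2 * w i j := by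
      rw [Finset.sum_comm]
      exact Finset.sum_congr rfl fun i _ => Finset.sum_congr rfl fun j _ => by
        rw [hw_symm]
    have : (∑ i, ∑ j, ((d i)^2 + (d j)^2)/2 * w i j)
        = (∑ i, ∑ j, (d i)^2 * w i j)/2 + (∑ i, ∑ j, (d j)^2 * w i j)/2 := by
      simp_rw [Finset.sum_div, ← Finset.sum_add_distrib]
      exact Finset.sum_congr rfl fun i _ => Finset.sum_congr rfl fun j _ => by ring
    rw [this, hc]; ring
  -- row sums
  have row : ∀ i : Fin p, (∑ j, w i j) ≤ 2 * (Φ₀ + Φ₂) := by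
    intro i
    set s₁ : Finset (Fin p) := Finset.univ.filter (fun j : Fin p => (j:ℕ) < (i:ℕ)) with hs₁
    set s₂ : Finset (Fin p) := Finset.univ.filter (fun j : Fin p => (i:ℕ) < (j:ℕ)) with hs₂
    have herase : Finset.univ.erase i = s₁ ∪ s₂ := by
      ext j
      simp only [Finset.mem_erase, Finset.mem_univ, and_true, Finset.mem_union,
        Finset.mem_filter, true_and, hs₁, hs₂, Fin.ext_iff, ne_eq]
      omega
    have hdisj : Disjoint s₁ s₂ := by
      rw [Finset.disjoint_left]
      intro j hj1 hj2
      simp only [hs₁, hs₂, Finset.mem_filter] at hj1 hj2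
      omega
    have hsum1 : (∑ j ∈ s₁, w i j) ≤ Φ₂ := by
      have he : (∑ j ∈ s₁, w i j) = ∑ j ∈ s₁, ψ ((i:ℕ) - (j:ℕ)) := by
        refine Finset.sum_congr rfl fun j hj => ?_
        have hjlt : (j:ℕ) < (i:ℕ) := (Finset.mem_filter.1 hj).2
        have hne : i ≠ j := fun hh => by omega
        simp [hwdef, hne, max_eq_left hjlt.le, min_eq_right hjlt.le]
      have hinj : ∀ x ∈ s₁, ∀ y ∈ s₁,
          (fun j : Fin p => (i:ℕ) - (j:ℕ) - 1) x = (fun j : Fin p => (i:ℕ) - (j:ℕ) - 1) y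
          → x = y := by
        intro x hx y hy hxy
        have hx' : (x:ℕ) < (i:ℕ) := (Finset.mem_filter.1 hx).2
        have hy' : (y:ℕ) < (i:ℕ) := (Finset.mem_filter.1 hy).2
        simp only at hxy
        exact Fin.ext (by omega)
      have he2 : (∑ j ∈ s₁, ψ ((i:ℕ) - (j:ℕ)))
          = ∑ k ∈ s₁.image (fun j : Fin p => (i:ℕ) - (j:ℕ) - 1), ψ (k + 1) := by
        rw [Finset.sum_image hinj]
        refine Finset.sum_congr rfl fun j hj => ?_
        have : (j:ℕ) < (i:ℕ) := (Finset.mem_filter.1 hj).2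
        congr 1; omega
      rw [he, he2]
      exact Summable.sum_le_tsum _ (fun k _ => hψ _) hψsum
    have hsum2 : (∑ j ∈ s₂, w i j) ≤ Φ₂ := by
      have he : (∑ j ∈ s₂, w i j) = ∑ j ∈ s₂, ψ ((j:ℕ) - (i:ℕ)) := by
        refine Finset.sum_congr rfl fun j hj => ?_
        have hjlt : (i:ℕ) < (j:ℕ) := (Finset.mem_filter.1 hj).2
        have hne : i ≠ j := fun hh => by omega
        simp [hwdef, hne, max_eq_right hjlt.le, min_eq_left hjlt.le]
      have hinj : ∀ x ∈ s₂, ∀ y ∈ s₂,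
          (fun j : Fin p => (j:ℕ) - (i:ℕ) - 1) x = (fun j : Fin p => (j:ℕ) - (i:ℕ) - 1) y
          → x = y := by
        intro x hx y hy hxy
        have hx' : (i:ℕ) < (x:ℕ) := (Finset.mem_filter.1 hx).2
        have hy' : (i:ℕ) < (y:ℕ) := (Finset.mem_filter.1 hy).2
        simp only at hxy
        exact Fin.ext (by omega)
      have he2 : (∑ j ∈ s₂, ψ ((j:ℕ) - (i:ℕ)))
          = ∑ k ∈ s₂.image (fun j : Fin p => (j:ℕ) - (i:ℕ) - 1), ψ (k + 1) := by
        rw [Finset.sum_image hinj]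
        refine Finset.sum_congr rfl fun j hj => ?_
        have : (i:ℕ) < (j:ℕ) := (Finset.mem_filter.1 hj).2
        congr 1; omega
      rw [he, he2]
      exact Summable.sum_le_tsum _ (fun k _ => hψ _) hψsum
    have hsplit : (∑ j, w i j) = w i i + ∑ j ∈ Finset.univ.erase i, w i j :=
      (Finset.add_sum_erase _ _ (Finset.mem_univ i)).symm
    rw [hsplit, herase, Finset.sum_union hdisj]
    have hwii : w i i = Φ₀ := by simp [hwdef]
    linarith
  -- conclude
  calc variance' μ (fun ω => ∑ i : Fin p, d i * X (↑i) ω ^ 2)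
      = ∑ i, ∑ j, d i * d j * cov μ (F ↑i) (F ↑j) :=
        variance'_sum_expand μ d (fun i : Fin p => F ↑i) (fun i => hFi ↑i)
          (fun i j => hFij ↑i ↑j)
    _ ≤ ∑ i, ∑ j, ((d i)^2 + (d j)^2)/2 * w i j := key
    _ = ∑ i, ∑ j, (d i)^2 * w i j := symm
    _ = ∑ i, (d i)^2 * ∑ j, w i j := by
        exact Finset.sum_congr rfl fun i _ => (Finset.mul_sum _ _ _).symm
    _ ≤ ∑ i, (d i)^2 * (2 * (Φ₀ + Φ₂)) :=
        Finset.sum_le_sum fun i _ => mul_le_mul_of_nonneg_left (row i) (sq_nonneg _)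
    _ = 2 * (Φ₀ + Φ₂) * ∑ i, (d i)^2 := by rw [← Finset.sum_mul]; ring
end

section
/- Let {X_k}_{k≥1} be centred random variables and {φ_k}_{k≥1} non-negative non-increasing reals such that |E[X_i X_j X_k X_l]| ≤ min{φ_{j−i}, φ_{l−k}} for all i < j < k < l, and set Φ₁ = Σ_{k=1}^∞ k·φ_k < ∞. Then for every p ≥ 1 and every a ∈ ℝ^p, |Σ_{1≤i<j<k<l≤p} a_i a_j a_k a_l E[X_i X_j X_k X_l]| ≤ Φ₁·(Σ_{i=1}^p a_i²)². -/
open MeasureTheory Finset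
open scoped BigOperators

private lemma key_count {p : ℕ} (φ : ℕ → ℝ) (hφ : ∀ k, 0 ≤ φ k)
    (c : Fin p × Fin p → ℝ) (hc : ∀ pr, 0 ≤ c pr)
    (s : Finset (Fin p × Fin p × Fin p × Fin p))
    (t : Finset (Fin p × Fin p))
    (π : Fin p × Fin p × Fin p × Fin p → Fin p × Fin p)
    (g : Fin p × Fin p × Fin p × Fin p → ℕ × ℕ)
    (hπ : ∀ q ∈ s, π q ∈ t)
    (hg1 : ∀ q ∈ s, 1 ≤ (g q).1 ∧ (g q).1 ≤ p ∧ 1 ≤ (g q).2 ∧ (g q).2 ≤ p)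
    (hinj : ∀ q ∈ s, ∀ q' ∈ s, π q = π q' → g q = g q' → q = q') :
    ∑ q ∈ s, c (π q) * φ (max (g q).1 (g q).2)
      ≤ (2 * ∑ m ∈ Finset.range (p+1), (m:ℝ) * φ m) * ∑ pr ∈ t, c pr := by
  classical
  set h : (Fin p × Fin p) × ℕ × ℕ → ℝ := fun y =>
    if 1 ≤ y.2.1 ∧ y.2.1 ≤ p ∧ 1 ≤ y.2.2 ∧ y.2.2 ≤ p then c y.1 * φ (max y.2.1 y.2.2) else 0
    with hh
  have h0 : ∀ y, 0 ≤ h y := by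
    intro y; rw [hh]; dsimp only
    split
    · exact mul_nonneg (hc _) (hφ _)
    · exact le_refl 0
  have step1 : ∑ q ∈ s, c (π q) * φ (max (g q).1 (g q).2) = ∑ q ∈ s, h (π q, g q) := by
    refine Finset.sum_congr rfl fun q hq => ?_
    obtain ⟨h1, h2, h3, h4⟩ := hg1 q hq
    rw [hh]; dsimp only
    rw [if_pos ⟨h1, h2, h3, h4⟩]
  have step2 : ∑ q ∈ s, h (π q, g q) = ∑ y ∈ s.image (fun q => (π q, g q)), h y := by
    refine (Finset.sum_image ?_).symm
    intro q hq q' hq' he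
    rw [Prod.mk.injEq] at he
    exact hinj q hq q' hq' he.1 he.2
  have step3 : ∑ y ∈ s.image (fun q => (π q, g q)), h y
      ≤ ∑ y ∈ t ×ˢ (Finset.range (p+1) ×ˢ Finset.range (p+1)), h y := by
    refine Finset.sum_le_sum_of_subset_of_nonneg ?_ (fun y _ _ => h0 y)
    intro y hy
    rw [Finset.mem_image] at hy
    obtain ⟨q, hq, rfl⟩ := hy
    obtain ⟨h1, h2, h3, h4⟩ := hg1 q hq
    rw [Finset.mem_product, Finset.mem_product, Finset.mem_range, Finset.mem_range]
    refine ⟨hπ q hq, ?_, ?_⟩ <;> dsimp only <;> omega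
  have step4 : ∑ y ∈ t ×ˢ (Finset.range (p+1) ×ˢ Finset.range (p+1)), h y
      = ∑ pr ∈ t, ∑ u ∈ Finset.range (p+1), ∑ v ∈ Finset.range (p+1), h (pr, u, v) := by
    rw [Finset.sum_product]
    refine Finset.sum_congr rfl fun pr _ => ?_
    rw [Finset.sum_product]
  have inner1 : ∀ u : ℕ, u ∈ Finset.range (p+1) →
      (∑ v ∈ Finset.range (p+1), if 1 ≤ v ∧ v ≤ u then φ u else 0) = (u:ℝ) * φ u := by
    intro u hu
    rw [Finset.mem_range] at hu
    rw [← Finset.sum_filter]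
    have hfil : (Finset.range (p+1)).filter (fun v => 1 ≤ v ∧ v ≤ u) = Finset.Icc 1 u := by
      ext v
      simp only [Finset.mem_filter, Finset.mem_range, Finset.mem_Icc]
      omega
    rw [hfil, Finset.sum_const, Nat.card_Icc]
    simp
  have innersum : ∀ pr, (∑ u ∈ Finset.range (p+1), ∑ v ∈ Finset.range (p+1), h (pr, u, v))
      ≤ (2 * ∑ m ∈ Finset.range (p+1), (m:ℝ) * φ m) * c pr := by
    intro pr
    have hbd : ∀ u ∈ Finset.range (p+1), ∀ v ∈ Finset.range (p+1),
        h (pr, u, v) ≤ c pr * ((if 1 ≤ v ∧ v ≤ u then φ u else 0)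
          + (if 1 ≤ u ∧ u ≤ v then φ v else 0)) := by
      intro u _ v _
      have e1 : 0 ≤ (if 1 ≤ v ∧ v ≤ u then φ u else 0) := by split; exacts [hφ _, le_refl 0]
      have e2 : 0 ≤ (if 1 ≤ u ∧ u ≤ v then φ v else 0) := by split; exacts [hφ _, le_refl 0]
      rw [hh]; dsimp only
      split
      · rename_i hcnd
        rcases le_total v u with hvu | huv
        · have e3 : (if 1 ≤ v ∧ v ≤ u then φ u else 0) = φ u := if_pos ⟨hcnd.2.2.1, hvu⟩
          rw [max_eq_left hvu, e3]
          nlinarith [mul_nonneg (hc pr) e2]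
        · have e3 : (if 1 ≤ u ∧ u ≤ v then φ v else 0) = φ v := if_pos ⟨hcnd.1, huv⟩
          rw [max_eq_right huv, e3]
          nlinarith [mul_nonneg (hc pr) e1]
      · exact mul_nonneg (hc pr) (add_nonneg e1 e2)
    calc (∑ u ∈ Finset.range (p+1), ∑ v ∈ Finset.range (p+1), h (pr, u, v))
        ≤ ∑ u ∈ Finset.range (p+1), ∑ v ∈ Finset.range (p+1),
            c pr * ((if 1 ≤ v ∧ v ≤ u then φ u else 0) + (if 1 ≤ u ∧ u ≤ v then φ v else 0)) := by
          refine Finset.sum_le_sum fun u hu => Finset.sum_le_sum fun v hv => hbd u hu v hv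
      _ = c pr * ((∑ u ∈ Finset.range (p+1), ∑ v ∈ Finset.range (p+1),
              (if 1 ≤ v ∧ v ≤ u then φ u else 0))
            + (∑ u ∈ Finset.range (p+1), ∑ v ∈ Finset.range (p+1),
              (if 1 ≤ u ∧ u ≤ v then φ v else 0))) := by
          rw [← Finset.sum_add_distrib]
          simp only [← Finset.sum_add_distrib, Finset.mul_sum]
      _ = c pr * ((∑ u ∈ Finset.range (p+1), (u:ℝ) * φ u)
            + (∑ v ∈ Finset.range (p+1), (v:ℝ) * φ v)) := by
          congr 1
          congr 1
          · exact Finset.sum_congr rfl inner1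
          · rw [Finset.sum_comm]
            exact Finset.sum_congr rfl inner1
      _ = (2 * ∑ m ∈ Finset.range (p+1), (m:ℝ) * φ m) * c pr := by ring
  calc ∑ q ∈ s, c (π q) * φ (max (g q).1 (g q).2)
      ≤ ∑ pr ∈ t, ∑ u ∈ Finset.range (p+1), ∑ v ∈ Finset.range (p+1), h (pr, u, v) := by
        rw [step1, step2, ← step4]; exact step3
    _ ≤ ∑ pr ∈ t, (2 * ∑ m ∈ Finset.range (p+1), (m:ℝ) * φ m) * c pr :=
        Finset.sum_le_sum fun pr _ => innersum pr
    _ = (2 * ∑ m ∈ Finset.range (p+1), (m:ℝ) * φ m) * ∑ pr ∈ t, c pr := by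
        rw [← Finset.mul_sum]

private lemma ordered_pairs_le {p : ℕ} (x : Fin p → ℝ) (hx : ∀ i, 0 ≤ x i) :
    2 * ∑ pr ∈ Finset.univ.filter (fun pr : Fin p × Fin p => pr.1 < pr.2), x pr.1 * x pr.2
      ≤ (∑ i, x i) ^ 2 := by
  classical
  have hswap : ∑ pr ∈ Finset.univ.filter (fun pr : Fin p × Fin p => pr.1 < pr.2), x pr.1 * x pr.2
      = ∑ pr ∈ Finset.univ.filter (fun pr : Fin p × Fin p => pr.2 < pr.1), x pr.1 * x pr.2 := by
    refine Finset.sum_bij' (fun pr _ => Prod.swap pr) (fun pr _ => Prod.swap pr) ?_ ?_ ?_ ?_ ?_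
    · intro pr hpr; simp only [Finset.mem_filter, Finset.mem_univ, true_and] at hpr ⊢
      exact hpr
    · intro pr hpr; simp only [Finset.mem_filter, Finset.mem_univ, true_and] at hpr ⊢
      exact hpr
    · intro pr _; exact Prod.swap_swap pr
    · intro pr _; exact Prod.swap_swap pr
    · intro pr _; exact mul_comm _ _
  have hsq : (∑ i, x i) ^ 2 = ∑ pr : Fin p × Fin p, x pr.1 * x pr.2 := by
    rw [sq, Finset.sum_mul_sum, Fintype.sum_prod_type]
  have hsub : (Finset.univ.filter (fun pr : Fin p × Fin p => pr.1 < pr.2))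
      ∪ (Finset.univ.filter (fun pr : Fin p × Fin p => pr.2 < pr.1)) ⊆ Finset.univ :=
    Finset.subset_univ _
  have hdisj : Disjoint (Finset.univ.filter (fun pr : Fin p × Fin p => pr.1 < pr.2))
      (Finset.univ.filter (fun pr : Fin p × Fin p => pr.2 < pr.1)) := by
    rw [Finset.disjoint_filter]
    intro pr _ h1 h2
    exact absurd h2 (not_lt_of_gt h1)
  have := Finset.sum_union (f := fun pr : Fin p × Fin p => x pr.1 * x pr.2) hdisj
  calc 2 * ∑ pr ∈ Finset.univ.filter (fun pr : Fin p × Fin p => pr.1 < pr.2), x pr.1 * x pr.2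
      = ∑ pr ∈ (Finset.univ.filter (fun pr : Fin p × Fin p => pr.1 < pr.2))
          ∪ (Finset.univ.filter (fun pr : Fin p × Fin p => pr.2 < pr.1)), x pr.1 * x pr.2 := by
        rw [this, ← hswap]; ring
    _ ≤ ∑ pr : Fin p × Fin p, x pr.1 * x pr.2 :=
        Finset.sum_le_sum_of_subset_of_nonneg hsub
          (fun pr _ _ => mul_nonneg (hx _) (hx _))
    _ = (∑ i, x i) ^ 2 := hsq.symm

/-- For centred random variables with `|E[X_i X_j X_k X_l]| ≤ min{φ_{j−i}, φ_{l−k}}` for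
`i < j < k < l` and `Φ₁ = Σ k φ_k < ∞`, the quadruple sum satisfies
`|Σ_{i<j<k<l} a_i a_j a_k a_l E[X_i X_j X_k X_l]| ≤ Φ₁ (Σ aᵢ²)²`. -/
theorem abs_quadruple_sum_le {Ω : Type*} [MeasurableSpace Ω]
    (μ : Measure Ω) [IsProbabilityMeasure μ] (X : ℕ → Ω → ℝ) (φ : ℕ → ℝ)
    (hL4 : ∀ k, MemLp (X k) 4 μ)
    (hcent : ∀ k, ∫ ω, X k ω ∂μ = 0)
    (hφ : ∀ k, 0 ≤ φ k)
    (hmono : ∀ k l : ℕ, 1 ≤ k → k ≤ l → φ l ≤ φ k)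
    (hbound : ∀ i j k l : ℕ, i < j → j < k → k < l →
      |∫ ω, X i ω * X j ω * X k ω * X l ω ∂μ| ≤ min (φ (j - i)) (φ (l - k)))
    (hsum : Summable (fun k : ℕ => (k : ℝ) * φ k)) :
    ∀ (p : ℕ) (a : Fin p → ℝ),
      |∑ i : Fin p, ∑ j : Fin p, ∑ k : Fin p, ∑ l : Fin p,
          (if i < j ∧ j < k ∧ k < l then
            a i * a j * a k * a l * ∫ ω, X i ω * X j ω * X k ω * X l ω ∂μ
          else 0)| ≤
        (∑' k : ℕ, (k : ℝ) * φ k) * (∑ i, (a i) ^ 2) ^ 2 := by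
  intro p a
  classical
  set A : ℝ := ∑ i, (a i) ^ 2 with hA
  have hA0 : 0 ≤ A := Finset.sum_nonneg fun i _ => sq_nonneg _
  set Φp : ℝ := ∑ m ∈ Finset.range (p+1), (m:ℝ) * φ m with hΦp
  have hΦp0 : 0 ≤ Φp := Finset.sum_nonneg fun m _ => mul_nonneg (Nat.cast_nonneg m) (hφ m)
  have hΦple : Φp ≤ ∑' k : ℕ, (k : ℝ) * φ k :=
    Summable.sum_le_tsum (Finset.range (p+1))
      (fun m _ => mul_nonneg (Nat.cast_nonneg m) (hφ m)) hsum
  -- the set of increasing quadruples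
  set s : Finset (Fin p × Fin p × Fin p × Fin p) :=
    Finset.univ.filter
      (fun q : Fin p × Fin p × Fin p × Fin p => q.1 < q.2.1 ∧ q.2.1 < q.2.2.1 ∧ q.2.2.1 < q.2.2.2)
    with hs
  set c : Fin p × Fin p → ℝ := fun pr => (a pr.1) ^ 2 * (a pr.2) ^ 2 with hcdef
  have hc : ∀ pr, 0 ≤ c pr := fun pr => mul_nonneg (sq_nonneg _) (sq_nonneg _)
  set g : Fin p × Fin p × Fin p × Fin p → ℕ × ℕ :=
    fun q => ((q.2.1 : ℕ) - (q.1 : ℕ), (q.2.2.2 : ℕ) - (q.2.2.1 : ℕ)) with hgdef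
  set t : Finset (Fin p × Fin p) :=
    Finset.univ.filter (fun pr : Fin p × Fin p => pr.1 < pr.2) with ht
  -- termwise bound
  have hterm : ∀ i j k l : Fin p, i < j → j < k → k < l →
      |a i * a j * a k * a l * ∫ ω, X i ω * X j ω * X k ω * X l ω ∂μ|
        ≤ ((a i)^2 * (a k)^2 + (a j)^2 * (a l)^2) / 2
            * φ (max ((j:ℕ) - (i:ℕ)) ((l:ℕ) - (k:ℕ))) := by
    intro i j k l hij hjk hkl
    rw [abs_mul]
    have h1 : |∫ ω, X i ω * X j ω * X k ω * X l ω ∂μ|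
        ≤ φ (max ((j:ℕ) - (i:ℕ)) ((l:ℕ) - (k:ℕ))) := by
      refine (hbound i j k l hij hjk hkl).trans ?_
      rcases max_choice ((j:ℕ) - (i:ℕ)) ((l:ℕ) - (k:ℕ)) with h | h <;> rw [h]
      · exact min_le_left _ _
      · exact min_le_right _ _
    have h2 : |a i * a j * a k * a l| ≤ ((a i)^2 * (a k)^2 + (a j)^2 * (a l)^2) / 2 := by
      have he : a i * a j * a k * a l = (a i * a k) * (a j * a l) := by ring
      rw [he, abs_mul]
      nlinarith [sq_nonneg (|a i * a k| - |a j * a l|), sq_abs (a i * a k),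
        sq_abs (a j * a l), abs_nonneg (a i * a k), abs_nonneg (a j * a l)]
    exact mul_le_mul h2 h1 (abs_nonneg _) (by positivity)
  -- g bounds on s
  have hg1 : ∀ q ∈ s, 1 ≤ (g q).1 ∧ (g q).1 ≤ p ∧ 1 ≤ (g q).2 ∧ (g q).2 ≤ p := by
    intro q hq
    rw [hs, Finset.mem_filter] at hq
    obtain ⟨-, h1, h2, h3⟩ := hq
    rw [Fin.lt_def] at h1 h2 h3
    have b1 := (q.2.1).isLt
    have b2 := (q.2.2.2).isLt
    rw [hgdef]
    dsimp only
    omega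
  -- injectivity for (i,k)
  have hinj1 : ∀ q ∈ s, ∀ q' ∈ s, (q.1, q.2.2.1) = (q'.1, q'.2.2.1) → g q = g q' → q = q' := by
    intro q hq q' hq' he hge
    rw [hs, Finset.mem_filter] at hq hq'
    obtain ⟨-, h1, h2, h3⟩ := hq
    obtain ⟨-, h1', h2', h3'⟩ := hq'
    rw [Fin.lt_def] at h1 h2 h3 h1' h2' h3'
    rw [Prod.mk.injEq] at he
    rw [hgdef, Prod.mk.injEq] at hge
    obtain ⟨e1, e2⟩ := he
    obtain ⟨e3, e4⟩ := hge
    have v1 : (q.1 : ℕ) = (q'.1 : ℕ) := by rw [e1]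
    have v2 : (q.2.2.1 : ℕ) = (q'.2.2.1 : ℕ) := by rw [e2]
    have v3 : (q.2.1 : ℕ) = (q'.2.1 : ℕ) := by omega
    have v4 : (q.2.2.2 : ℕ) = (q'.2.2.2 : ℕ) := by omega
    exact Prod.ext (Fin.ext v1) (Prod.ext (Fin.ext v3) (Prod.ext (Fin.ext v2) (Fin.ext v4)))
  -- injectivity for (j,l)
  have hinj2 : ∀ q ∈ s, ∀ q' ∈ s, (q.2.1, q.2.2.2) = (q'.2.1, q'.2.2.2) → g q = g q' → q = q' := by
    intro q hq q' hq' he hge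
    rw [hs, Finset.mem_filter] at hq hq'
    obtain ⟨-, h1, h2, h3⟩ := hq
    obtain ⟨-, h1', h2', h3'⟩ := hq'
    rw [Fin.lt_def] at h1 h2 h3 h1' h2' h3'
    rw [Prod.mk.injEq] at he
    rw [hgdef, Prod.mk.injEq] at hge
    obtain ⟨e1, e2⟩ := he
    obtain ⟨e3, e4⟩ := hge
    have v1 : (q.2.1 : ℕ) = (q'.2.1 : ℕ) := by rw [e1]
    have v2 : (q.2.2.2 : ℕ) = (q'.2.2.2 : ℕ) := by rw [e2]
    have v3 : (q.1 : ℕ) = (q'.1 : ℕ) := by omega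
    have v4 : (q.2.2.1 : ℕ) = (q'.2.2.1 : ℕ) := by omega
    exact Prod.ext (Fin.ext v3) (Prod.ext (Fin.ext v1) (Prod.ext (Fin.ext v4) (Fin.ext v2)))
  have hπ1 : ∀ q ∈ s, (q.1, q.2.2.1) ∈ t := by
    intro q hq
    rw [hs, Finset.mem_filter] at hq
    rw [ht, Finset.mem_filter]
    exact ⟨Finset.mem_univ _, lt_trans hq.2.1 hq.2.2.1⟩
  have hπ2 : ∀ q ∈ s, (q.2.1, q.2.2.2) ∈ t := by
    intro q hq
    rw [hs, Finset.mem_filter] at hq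
    rw [ht, Finset.mem_filter]
    exact ⟨Finset.mem_univ _, lt_trans hq.2.2.1 hq.2.2.2⟩
  have key1 := key_count φ hφ c hc s t (fun q => (q.1, q.2.2.1)) g hπ1 hg1 hinj1
  have key2 := key_count φ hφ c hc s t (fun q => (q.2.1, q.2.2.2)) g hπ2 hg1 hinj2
  have hpairs : 2 * ∑ pr ∈ t, c pr ≤ A ^ 2 := by
    have := ordered_pairs_le (fun i => (a i) ^ 2) (fun i => sq_nonneg _)
    exact this
  -- rewrite the quadruple nested sum as a sum over the product type
  have hrw : (∑ i : Fin p, ∑ j : Fin p, ∑ k : Fin p, ∑ l : Fin p,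
        (if i < j ∧ j < k ∧ k < l then
          a i * a j * a k * a l * ∫ ω, X i ω * X j ω * X k ω * X l ω ∂μ
        else 0))
      = ∑ q : Fin p × Fin p × Fin p × Fin p,
        (if q.1 < q.2.1 ∧ q.2.1 < q.2.2.1 ∧ q.2.2.1 < q.2.2.2 then
          a q.1 * a q.2.1 * a q.2.2.1 * a q.2.2.2
            * ∫ ω, X q.1 ω * X q.2.1 ω * X q.2.2.1 ω * X q.2.2.2 ω ∂μ
        else 0) := by
    rw [Fintype.sum_prod_type]
    refine Finset.sum_congr rfl fun i _ => ?_
    rw [Fintype.sum_prod_type]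
    refine Finset.sum_congr rfl fun j _ => ?_
    rw [Fintype.sum_prod_type]
  rw [hrw]
  calc |∑ q : Fin p × Fin p × Fin p × Fin p,
        (if q.1 < q.2.1 ∧ q.2.1 < q.2.2.1 ∧ q.2.2.1 < q.2.2.2 then
          a q.1 * a q.2.1 * a q.2.2.1 * a q.2.2.2
            * ∫ ω, X q.1 ω * X q.2.1 ω * X q.2.2.1 ω * X q.2.2.2 ω ∂μ
        else 0)|
      ≤ ∑ q : Fin p × Fin p × Fin p × Fin p,
        |if q.1 < q.2.1 ∧ q.2.1 < q.2.2.1 ∧ q.2.2.1 < q.2.2.2 then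
          a q.1 * a q.2.1 * a q.2.2.1 * a q.2.2.2
            * ∫ ω, X q.1 ω * X q.2.1 ω * X q.2.2.1 ω * X q.2.2.2 ω ∂μ
        else 0| := Finset.abs_sum_le_sum_abs _ _
    _ ≤ ∑ q : Fin p × Fin p × Fin p × Fin p,
        (if q.1 < q.2.1 ∧ q.2.1 < q.2.2.1 ∧ q.2.2.1 < q.2.2.2 then
          (c (q.1, q.2.2.1) + c (q.2.1, q.2.2.2)) / 2 * φ (max (g q).1 (g q).2)
        else 0) := by
        refine Finset.sum_le_sum fun q _ => ?_
        split
        · rename_i hcnd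
          have := hterm q.1 q.2.1 q.2.2.1 q.2.2.2 hcnd.1 hcnd.2.1 hcnd.2.2
          rw [hcdef, hgdef]
          exact this
        · simp
    _ = ∑ q ∈ s, (c (q.1, q.2.2.1) + c (q.2.1, q.2.2.2)) / 2 * φ (max (g q).1 (g q).2) := by
        rw [hs, Finset.sum_filter]
    _ = ((∑ q ∈ s, c (q.1, q.2.2.1) * φ (max (g q).1 (g q).2))
          + (∑ q ∈ s, c (q.2.1, q.2.2.2) * φ (max (g q).1 (g q).2))) / 2 := by
        rw [← Finset.sum_add_distrib, Finset.sum_div]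
        refine Finset.sum_congr rfl fun q _ => ?_
        ring
    _ ≤ ((2 * Φp) * ∑ pr ∈ t, c pr + (2 * Φp) * ∑ pr ∈ t, c pr) / 2 := by
        have := add_le_add key1 key2
        linarith
    _ = Φp * (2 * ∑ pr ∈ t, c pr) := by ring
    _ ≤ Φp * A ^ 2 := mul_le_mul_of_nonneg_left hpairs hΦp0
    _ ≤ (∑' k : ℕ, (k : ℝ) * φ k) * A ^ 2 :=
        mul_le_mul_of_nonneg_right hΦple (by positivity)
end

section
/- Let (X_t)_{t∈ℤ} be a centred weakly stationary time series with autocovariances C(j) = Cov(X_t, X_{t+j}) satisfying Σ_{j=1}^∞ j·|C(j)| < ∞, and let K: [0,∞) → ℝ satisfy K(0) = 1, K continuous at 0, and sup_{x≥0}|K(x)| < ∞. Define σ̂²_n = (1/n)·Σ_{s,t=1}^n K(|s−t|/m)·X_s X_t and σ² = Σ_{j=−∞}^∞ C(j). Then E[σ̂²_n] − σ² = 2·Σ_{j=1}^n (K(j/m) − 1)·C(j) + O(1/n) as m, n → ∞, and consequently E[σ̂²_n] − σ² → 0 as m, n → ∞. -/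
open MeasureTheory Filter
open scoped BigOperators Topology

/-- The kernel long-run variance estimator
`σ̂²_{m,n} = n⁻¹ Σ_{s,t=1}^n K(|s−t|/m) X_s X_t`. -/
noncomputable def hatSigmaSq {Ω : Type*} (X : ℤ → Ω → ℝ) (K : ℝ → ℝ) (m n : ℕ) (ω : Ω) : ℝ :=
  (n : ℝ)⁻¹ * ∑ s ∈ Finset.Icc (1 : ℤ) (n : ℤ), ∑ t ∈ Finset.Icc (1 : ℤ) (n : ℤ),
    K (|(s : ℝ) - (t : ℝ)| / (m : ℝ)) * X s ω * X t ω

lemma bias_map_range (n : ℕ) :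
    (Finset.range n).map ⟨fun i : ℕ => (i : ℤ) + 1, fun a b h => by simpa using h⟩
      = Finset.Icc (1:ℤ) (n:ℤ) := by
  ext x
  simp only [Finset.mem_map, Finset.mem_range, Finset.mem_Icc, Function.Embedding.coeFn_mk]
  constructor
  · rintro ⟨i, hi, rfl⟩; show 1 ≤ (i:ℤ)+1 ∧ (i:ℤ)+1 ≤ n; omega
  · rintro ⟨h1, h2⟩
    exact ⟨(x - 1).toNat, by omega, show ((x - 1).toNat : ℤ) + 1 = x by omega⟩

lemma bias_sumIcc (f : ℤ → ℝ) (n : ℕ) :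
    ∑ t ∈ Finset.Icc (1:ℤ) (n:ℤ), f t = ∑ i ∈ Finset.range n, f ((i:ℤ)+1) := by
  rw [← bias_map_range, Finset.sum_map]; rfl

lemma bias_reflectSum (F : ℤ → ℝ) (n : ℕ) :
    ∑ s ∈ Finset.range n, F ((n:ℤ) - (s:ℤ)) = ∑ j ∈ Finset.range n, F ((j:ℤ)+1) := by
  rw [← Finset.sum_range_reflect]
  apply Finset.sum_congr rfl
  intro j hj
  simp only [Finset.mem_range] at hj
  congr 1
  omega

lemma bias_doubleSum (F : ℤ → ℝ) (hF : ∀ j, F (-j) = F j) (n : ℕ) :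
    ∑ s ∈ Finset.range n, ∑ t ∈ Finset.range n, F ((t:ℤ) - (s:ℤ))
      = n * F 0 + 2 * ∑ j ∈ Finset.range n, ((n:ℝ) - ((j:ℝ)+1)) * F ((j:ℤ)+1) := by
  induction n with
  | zero => simp
  | succ n ih =>
    have rhs : ∑ j ∈ Finset.range (n+1), (((n:ℝ)+1) - ((j:ℝ)+1)) * F ((j:ℤ)+1)
        = (∑ j ∈ Finset.range n, ((n:ℝ) - ((j:ℝ)+1)) * F ((j:ℤ)+1))
          + ∑ j ∈ Finset.range n, F ((j:ℤ)+1) := by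
      rw [Finset.sum_range_succ, ← Finset.sum_add_distrib]
      simp only [sub_self, zero_mul, add_zero]
      exact Finset.sum_congr rfl (by intro j _; ring)
    rw [Finset.sum_range_succ]
    have inner : ∀ s ∈ Finset.range n, ∑ t ∈ Finset.range (n+1), F ((t:ℤ)-(s:ℤ))
        = (∑ t ∈ Finset.range n, F ((t:ℤ)-(s:ℤ))) + F ((n:ℤ)-(s:ℤ)) := by
      intro s _
      rw [Finset.sum_range_succ]
    rw [Finset.sum_congr rfl inner, Finset.sum_add_distrib, ih, bias_reflectSum F n,
      Finset.sum_range_succ]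
    have refl2 : ∑ t ∈ Finset.range n, F ((t:ℤ)-(n:ℤ)) = ∑ j ∈ Finset.range n, F ((j:ℤ)+1) := by
      have h : ∀ t ∈ Finset.range n, F ((t:ℤ)-(n:ℤ)) = F ((n:ℤ)-(t:ℤ)) := by
        intro t _
        rw [show ((t:ℤ) - n) = -((n:ℤ) - t) by ring, hF]
      rw [Finset.sum_congr rfl h, bias_reflectSum F n]
    rw [refl2, sub_self]
    push_cast
    rw [rhs]
    ring

set_option maxHeartbeats 2000000 in
/-- Bias expansion: for a centred weakly stationary series with `Σ_j j|C(j)| < ∞` and a bounded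
kernel with `K(0) = 1` continuous at `0`,
`E[σ̂²_n] − σ² = 2 Σ_{j=1}^n (K(j/m) − 1) C(j) + O(1/n)`, and hence `E[σ̂²_n] − σ² → 0` as
`m, n → ∞`. -/
theorem bias_hatSigmaSq {Ω : Type*} [MeasurableSpace Ω]
    (μ : Measure Ω) [IsProbabilityMeasure μ] (X : ℤ → Ω → ℝ) (K : ℝ → ℝ) (Cz : ℤ → ℝ)
    (hL2 : ∀ t, MemLp (X t) 2 μ)
    (hcent : ∀ t, ∫ ω, X t ω ∂μ = 0)
    (hstat : ∀ t j : ℤ, cov μ (X t) (X (t + j)) = Cz j)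
    (hCsum : Summable (fun j : ℕ => (j : ℝ) * |Cz j|))
    (hK0 : K 0 = 1)
    (hKcont : ContinuousWithinAt K (Set.Ici 0) 0)
    (hKbdd : ∃ M : ℝ, ∀ x : ℝ, 0 ≤ x → |K x| ≤ M) :
    (∃ B : ℝ, ∀ m n : ℕ, 1 ≤ m → 1 ≤ n →
      |(∫ ω, hatSigmaSq X K m n ω ∂μ) - (∑' j : ℤ, Cz j) -
          2 * ∑ j ∈ Finset.Icc 1 n, (K ((j : ℝ) / (m : ℝ)) - 1) * Cz (j : ℤ)| ≤ B / n) ∧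
    Tendsto
      (fun q : ℕ × ℕ => (∫ ω, hatSigmaSq X K q.1 q.2 ω ∂μ) - ∑' j : ℤ, Cz j)
      (atTop ×ˢ atTop) (𝓝 0) := by
  classical
  obtain ⟨M₀, hM₀⟩ := hKbdd
  set M : ℝ := max M₀ 1 with hMdef
  have hM1 : ∀ x : ℝ, 0 ≤ x → |K x| ≤ M := fun x hx => (hM₀ x hx).trans (le_max_left _ _)
  have hMone : (1:ℝ) ≤ M := le_max_right _ _
  -- basic integrability and covariance facts
  have hInt : ∀ s t : ℤ, Integrable (fun ω => X s ω * X t ω) μ := by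
    intro s t
    have h := (haveI : ENNReal.HolderTriple 2 2 1 := ⟨by simp [ENNReal.inv_two_add_inv_two]⟩; (hL2 t).smul (hL2 s) (r := 1)).integrable le_rfl
    exact h
  have hmean : ∀ s t : ℤ, ∫ ω, X s ω * X t ω ∂μ = Cz (t - s) := by
    intro s t
    have h := hstat s (t - s)
    rw [show s + (t - s) = t by ring] at h
    simp only [cov, hcent, mul_zero, sub_zero] at h
    exact h
  have heven : ∀ j, Cz (-j) = Cz j := by
    intro j
    have h1 := hstat 0 j
    have h2 := hstat j (-j)
    rw [zero_add] at h1
    rw [add_neg_cancel] at h2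
    rw [← h1, ← h2]
    simp only [cov, mul_comm]
  -- shifted sequence
  set c1 : ℕ → ℝ := fun j => Cz ((j:ℤ)+1) with hc1def
  have hg : Summable (fun j : ℕ => ((j:ℝ)+1) * |c1 j|) := by
    have h := (summable_nat_add_iff 1).mpr hCsum
    refine h.congr fun j => ?_
    simp only [hc1def]
    push_cast
    ring_nf
  have habs1 : Summable (fun j : ℕ => |c1 j|) := by
    refine Summable.of_nonneg_of_le (fun j => abs_nonneg _) (fun j => ?_) hg
    nlinarith [abs_nonneg (c1 j), Nat.cast_nonneg (α := ℝ) j]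
  have habs : Summable (fun j : ℕ => |Cz (j:ℤ)|) := by
    refine (summable_nat_add_iff 1).mp (habs1.congr fun j => ?_)
    simp only [hc1def]
    norm_cast
  have hc1sum : Summable c1 := habs1.of_abs
  have hnat : Summable (fun j : ℕ => Cz (j:ℤ)) := habs.of_abs
  have hneg : Summable (fun n : ℕ => Cz (-((n:ℤ)+1))) := by
    refine hc1sum.congr fun n => ?_
    rw [heven]
  have htsumZ : ∑' j : ℤ, Cz j = Cz 0 + 2 * ∑' n : ℕ, c1 n := by
    rw [tsum_of_nat_of_neg_add_one hnat hneg]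
    have h1 : ∑' n : ℕ, Cz ((n:ℕ):ℤ) = Cz 0 + ∑' n : ℕ, c1 n := by
      rw [Summable.tsum_eq_zero_add hnat]
      simp only [hc1def]
      norm_num
    have h2 : ∑' n : ℕ, Cz (-((n:ℤ)+1)) = ∑' n : ℕ, c1 n :=
      tsum_congr fun n => heven _
    rw [h1, h2]
    ring
  -- the series S = Σ j |C j|
  set S : ℝ := ∑' j : ℕ, (j:ℝ) * |Cz (j:ℤ)| with hSdef
  have hS0 : 0 ≤ S := tsum_nonneg fun j => mul_nonneg (Nat.cast_nonneg j) (abs_nonneg _)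
  have hgS : ∑' j : ℕ, ((j:ℝ)+1) * |c1 j| = S := by
    rw [hSdef, Summable.tsum_eq_zero_add hCsum]
    norm_num
    rfl
  -- expectation formula
  have hE : ∀ m n : ℕ, (∫ ω, hatSigmaSq X K m n ω ∂μ)
      = (n:ℝ)⁻¹ * ((n:ℝ) * Cz 0 +
        2 * ((n:ℝ) * (∑ j ∈ Finset.range n, K (((j:ℝ)+1)/(m:ℝ)) * c1 j)
          - ∑ j ∈ Finset.range n, ((j:ℝ)+1) * (K (((j:ℝ)+1)/(m:ℝ)) * c1 j))) := by
    intro m n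
    set F : ℤ → ℝ := fun j => K (|(j:ℝ)| / (m:ℝ)) * Cz j with hFdef
    have hFeven : ∀ j, F (-j) = F j := by
      intro j
      simp only [hFdef, Int.cast_neg, abs_neg, heven]
    have hterm : ∀ s t : ℤ,
        Integrable (fun ω => K (|(s:ℝ)-(t:ℝ)|/(m:ℝ)) * X s ω * X t ω) μ := by
      intro s t
      simpa [mul_assoc] using (hInt s t).const_mul (K (|(s:ℝ)-(t:ℝ)|/(m:ℝ)))
    have step1 : (∫ ω, hatSigmaSq X K m n ω ∂μ)
        = (n:ℝ)⁻¹ * ∑ s ∈ Finset.Icc (1:ℤ) (n:ℤ), ∑ t ∈ Finset.Icc (1:ℤ) (n:ℤ), F (t - s) := by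
      unfold hatSigmaSq
      rw [integral_const_mul]
      congr 1
      rw [integral_finset_sum _ (fun s _ => integrable_finset_sum _ (fun t _ => hterm s t))]
      refine Finset.sum_congr rfl fun s _ => ?_
      rw [integral_finset_sum _ (fun t _ => hterm s t)]
      refine Finset.sum_congr rfl fun t _ => ?_
      have e1 : (fun ω => K (|(s:ℝ)-(t:ℝ)|/(m:ℝ)) * X s ω * X t ω)
          = fun ω => K (|(s:ℝ)-(t:ℝ)|/(m:ℝ)) * (X s ω * X t ω) := by
        funext ω; ring
      rw [e1, integral_const_mul, hmean]
      have harg : |(s:ℝ)-(t:ℝ)| = |((t - s : ℤ):ℝ)| := by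
        push_cast
        rw [abs_sub_comm]
      rw [hFdef]
      rw [harg]
    rw [step1]
    rw [bias_sumIcc (fun s => ∑ t ∈ Finset.Icc (1:ℤ) (n:ℤ), F (t - s)) n]
    have step2 : ∀ i : ℕ, ∑ t ∈ Finset.Icc (1:ℤ) (n:ℤ), F (t - ((i:ℤ)+1))
        = ∑ t ∈ Finset.range n, F ((t:ℤ) - (i:ℤ)) := by
      intro i
      rw [bias_sumIcc (fun t => F (t - ((i:ℤ)+1))) n]
      exact Finset.sum_congr rfl fun t _ => by congr 1; ring
    rw [Finset.sum_congr rfl fun i _ => step2 i, bias_doubleSum F hFeven n]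
    have hF0 : F 0 = Cz 0 := by
      simp [hFdef, hK0]
    have hFj : ∀ j : ℕ, F ((j:ℤ)+1) = K (((j:ℝ)+1)/(m:ℝ)) * c1 j := by
      intro j
      simp only [hFdef, hc1def]
      congr 2
      push_cast
      rw [abs_of_nonneg (by positivity)]
    rw [hF0]
    have e2 : ∑ j ∈ Finset.range n, ((n:ℝ) - ((j:ℝ)+1)) * F ((j:ℤ)+1)
        = ∑ j ∈ Finset.range n, ((n:ℝ) * (K (((j:ℝ)+1)/(m:ℝ)) * c1 j)
            - ((j:ℝ)+1) * (K (((j:ℝ)+1)/(m:ℝ)) * c1 j)) := by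
      refine Finset.sum_congr rfl fun j _ => ?_
      rw [hFj j]
      ring
    rw [e2, Finset.sum_sub_distrib, ← Finset.mul_sum]
  -- rewrite the main sum
  have hmainsum : ∀ m n : ℕ, ∑ j ∈ Finset.Icc 1 n, (K ((j:ℝ)/(m:ℝ)) - 1) * Cz (j:ℤ)
      = (∑ j ∈ Finset.range n, K (((j:ℝ)+1)/(m:ℝ)) * c1 j) - ∑ j ∈ Finset.range n, c1 j := by
    intro m n
    rw [← Finset.Ico_add_one_right_eq_Icc, Finset.sum_Ico_eq_sum_range]
    rw [← Finset.sum_sub_distrib]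
    refine Finset.sum_congr rfl fun i _ => ?_
    have ha : ((1+i : ℕ):ℝ) = (i:ℝ)+1 := by push_cast; ring
    have hb : ((1+i : ℕ):ℤ) = (i:ℤ)+1 := by push_cast; ring
    rw [ha, hb]
    simp only [hc1def]
    ring
  have htail : ∀ n : ℕ, (∑' j : ℕ, c1 j) - ∑ j ∈ Finset.range n, c1 j
      = ∑' i : ℕ, c1 (i + n) := by
    intro n
    rw [← Summable.sum_add_tsum_nat_add n hc1sum]
    ring
  -- the key algebraic identity
  have hkey : ∀ m n : ℕ, 1 ≤ n →
      (∫ ω, hatSigmaSq X K m n ω ∂μ) - (∑' j : ℤ, Cz j) -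
        2 * ∑ j ∈ Finset.Icc 1 n, (K ((j:ℝ)/(m:ℝ)) - 1) * Cz (j:ℤ)
      = -(2/(n:ℝ)) * (∑ j ∈ Finset.range n, ((j:ℝ)+1) * (K (((j:ℝ)+1)/(m:ℝ)) * c1 j))
        - 2 * ∑' i : ℕ, c1 (i + n) := by
    intro m n hn
    have hn0 : (n:ℝ) ≠ 0 := Nat.cast_ne_zero.mpr (by omega)
    rw [hE m n, htsumZ, hmainsum m n, ← htail n]
    field_simp
    ring
  -- bounds
  have hQb : ∀ m n : ℕ,
      |∑ j ∈ Finset.range n, ((j:ℝ)+1) * (K (((j:ℝ)+1)/(m:ℝ)) * c1 j)| ≤ M * S := by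
    intro m n
    have step : ∀ j ∈ Finset.range n, |((j:ℝ)+1) * (K (((j:ℝ)+1)/(m:ℝ)) * c1 j)|
        ≤ M * (((j:ℝ)+1) * |c1 j|) := by
      intro j _
      rw [abs_mul, abs_mul]
      have h1 : |((j:ℝ)+1)| = (j:ℝ)+1 := abs_of_nonneg (by positivity)
      rw [h1]
      have h2 : |K (((j:ℝ)+1)/(m:ℝ))| ≤ M := hM1 _ (by positivity)
      have h3 : 0 ≤ |c1 j| := abs_nonneg _
      have h4 : |K (((j:ℝ)+1)/(m:ℝ))| * |c1 j| ≤ M * |c1 j| :=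
        mul_le_mul_of_nonneg_right h2 h3
      calc ((j:ℝ)+1) * (|K (((j:ℝ)+1)/(m:ℝ))| * |c1 j|)
          ≤ ((j:ℝ)+1) * (M * |c1 j|) := mul_le_mul_of_nonneg_left h4 (by positivity)
        _ = M * (((j:ℝ)+1) * |c1 j|) := by ring
    calc |∑ j ∈ Finset.range n, ((j:ℝ)+1) * (K (((j:ℝ)+1)/(m:ℝ)) * c1 j)|
        ≤ ∑ j ∈ Finset.range n, |((j:ℝ)+1) * (K (((j:ℝ)+1)/(m:ℝ)) * c1 j)| :=
          Finset.abs_sum_le_sum_abs _ _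
      _ ≤ ∑ j ∈ Finset.range n, M * (((j:ℝ)+1) * |c1 j|) := Finset.sum_le_sum step
      _ = M * ∑ j ∈ Finset.range n, ((j:ℝ)+1) * |c1 j| := by rw [Finset.mul_sum]
      _ ≤ M * S := by
          refine mul_le_mul_of_nonneg_left ?_ (by linarith)
          have := Summable.sum_le_tsum (Finset.range n)
            (fun j _ => mul_nonneg (by positivity) (abs_nonneg _)) hg
          exact this.trans_eq hgS
  have hTb : ∀ n : ℕ, 1 ≤ n → |∑' i : ℕ, c1 (i + n)| ≤ S / n := by
    intro n hn
    have hshift : Summable (fun i : ℕ => |c1 (i+n)|) := (summable_nat_add_iff n).mpr habs1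
    have hg' : Summable (fun i : ℕ => (((i+n:ℕ):ℝ)+1) * |c1 (i+n)|) :=
      (summable_nat_add_iff n).mpr hg
    have h1 : |∑' i : ℕ, c1 (i+n)| ≤ ∑' i : ℕ, |c1 (i+n)| := by
      have h := norm_tsum_le_tsum_norm (f := fun i : ℕ => c1 (i+n))
        (by simpa [Real.norm_eq_abs] using hshift)
      simpa [Real.norm_eq_abs] using h
    refine h1.trans ?_
    have h2 : ∀ i : ℕ, |c1 (i+n)| ≤ (1/(n:ℝ)) * ((((i+n:ℕ):ℝ)+1) * |c1 (i+n)|) := by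
      intro i
      have hn1 : (1:ℝ) ≤ (n:ℝ) := by exact_mod_cast hn
      have hle : (n:ℝ) ≤ ((i+n:ℕ):ℝ)+1 := by
        push_cast
        linarith [Nat.cast_nonneg (α := ℝ) i]
      have h3 : (n:ℝ) * |c1 (i+n)| ≤ (((i+n:ℕ):ℝ)+1) * |c1 (i+n)| :=
        mul_le_mul_of_nonneg_right hle (abs_nonneg _)
      calc |c1 (i+n)| = (1/(n:ℝ)) * ((n:ℝ) * |c1 (i+n)|) := by field_simp
        _ ≤ (1/(n:ℝ)) * ((((i+n:ℕ):ℝ)+1) * |c1 (i+n)|) :=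
            mul_le_mul_of_nonneg_left h3 (by positivity)
    have h4 : ∑' i : ℕ, |c1 (i+n)| ≤ ∑' i : ℕ, (1/(n:ℝ)) * ((((i+n:ℕ):ℝ)+1) * |c1 (i+n)|) :=
      Summable.tsum_le_tsum h2 hshift (hg'.mul_left _)
    refine h4.trans ?_
    rw [tsum_mul_left]
    have h5 : ∑' i : ℕ, ((((i+n:ℕ):ℝ)+1) * |c1 (i+n)|) ≤ S := by
      have h6 := Summable.sum_add_tsum_nat_add n hg
      have hpos : 0 ≤ ∑ j ∈ Finset.range n, ((j:ℝ)+1) * |c1 j| :=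
        Finset.sum_nonneg fun j _ => mul_nonneg (by positivity) (abs_nonneg _)
      linarith [hgS]
    have hn1 : (0:ℝ) < (n:ℝ) := by exact_mod_cast hn
    calc (1/(n:ℝ)) * ∑' i : ℕ, ((((i+n:ℕ):ℝ)+1) * |c1 (i+n)|)
        ≤ (1/(n:ℝ)) * S := mul_le_mul_of_nonneg_left h5 (by positivity)
      _ = S / n := by ring
  -- the O(1/n) bound
  have hbound : ∀ m n : ℕ, 1 ≤ n →
      |(∫ ω, hatSigmaSq X K m n ω ∂μ) - (∑' j : ℤ, Cz j) -
        2 * ∑ j ∈ Finset.Icc 1 n, (K ((j:ℝ)/(m:ℝ)) - 1) * Cz (j:ℤ)|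
      ≤ (2*M*S + 2*S) / n := by
    intro m n hn
    rw [hkey m n hn]
    have hn1 : (0:ℝ) < (n:ℝ) := by exact_mod_cast hn
    have h1 := hQb m n
    have h2 := hTb n hn
    have e : (2*M*S + 2*S)/(n:ℝ) = (2/(n:ℝ))*(M*S) + 2*(S/(n:ℝ)) := by field_simp
    rw [e, sub_eq_add_neg]
    refine (abs_add_le _ _).trans ?_
    rw [abs_neg, abs_mul, abs_mul, abs_neg]
    have ha1 : |2/(n:ℝ)| = 2/(n:ℝ) := abs_of_nonneg (by positivity)
    have ha2 : |(2:ℝ)| = 2 := by norm_num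
    rw [ha1, ha2]
    have hd : 0 ≤ 2/(n:ℝ) := by positivity
    nlinarith
  refine ⟨⟨2*M*S + 2*S, fun m n _ hn => hbound m n hn⟩, ?_⟩
  -- convergence of the main term
  have hA0 : (0:ℝ) ≤ ∑' j : ℕ, |Cz (j:ℤ)| := tsum_nonneg fun _ => abs_nonneg _
  set A : ℝ := ∑' j : ℕ, |Cz (j:ℤ)| with hAdef
  have hmain0 : Tendsto
      (fun q : ℕ × ℕ => ∑ j ∈ Finset.Icc 1 q.2, (K ((j:ℝ)/(q.1:ℝ)) - 1) * Cz (j:ℤ))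
      (atTop ×ˢ atTop) (𝓝 0) := by
    rw [NormedAddCommGroup.tendsto_nhds_zero]
    intro ε hε
    have hM2 : (0:ℝ) < M + 1 := by linarith
    -- tail cutoff
    have htail0 : Tendsto (fun N : ℕ => ∑' i : ℕ, |c1 (i + N)|) atTop (𝓝 0) := by
      simpa using tendsto_sum_nat_add (fun j : ℕ => |c1 j|)
    obtain ⟨N, hN⟩ := (htail0.eventually
      (gt_mem_nhds (show (0:ℝ) < ε/(4*(M+1)) by positivity))).exists
    -- continuity cutoff
    obtain ⟨δ, hδ0, hδ⟩ := Metric.continuousWithinAt_iff.mp hKcont (ε/(2*(A+1))) (by positivity)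
    set m₀ : ℕ := Nat.ceil ((N:ℝ)/δ) + 1 with hm₀def
    filter_upwards [(eventually_ge_atTop m₀).prod_inl atTop] with q hq
    obtain ⟨m, n⟩ := q
    simp only at hq ⊢
    have hm0 : (0:ℝ) < (m:ℝ) := by
      have : 1 ≤ m := le_trans (by omega) hq
      exact_mod_cast this
    -- small arguments are close to K 0 = 1
    have hsmall : ∀ j : ℕ, j ≤ N → |K ((j:ℝ)/(m:ℝ)) - 1| ≤ ε/(2*(A+1)) := by
      intro j hj
      have hx0 : (0:ℝ) ≤ (j:ℝ)/(m:ℝ) := by positivity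
      have hxlt : (j:ℝ)/(m:ℝ) < δ := by
        have h1 : (j:ℝ) ≤ (N:ℝ) := by exact_mod_cast hj
        have h2 : (N:ℝ)/δ < (m:ℝ) := by
          have h3 : (m₀:ℝ) ≤ (m:ℝ) := by exact_mod_cast hq
          have h4 : (N:ℝ)/δ ≤ (Nat.ceil ((N:ℝ)/δ) : ℝ) := Nat.le_ceil _
          have h5 : ((Nat.ceil ((N:ℝ)/δ) : ℕ):ℝ) + 1 ≤ (m:ℝ) := by
            rw [hm₀def] at h3
            push_cast at h3
            linarith
          linarith
        rw [div_lt_iff₀ hm0]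
        calc (j:ℝ) ≤ (N:ℝ) := h1
          _ < δ * m := by
              rw [div_lt_iff₀ hδ0] at h2
              linarith [mul_comm δ (m:ℝ)]
      have := hδ (Set.mem_Ici.mpr hx0) (by simpa [Real.dist_eq, abs_of_nonneg hx0] using hxlt)
      rw [Real.dist_eq, hK0] at this
      exact this.le
    -- split the sum
    rw [Real.norm_eq_abs]
    have hsplit := Finset.sum_filter_add_sum_filter_not (Finset.Icc 1 n) (fun j => j ≤ N)
      (fun j => |(K ((j:ℝ)/(m:ℝ)) - 1) * Cz (j:ℤ)|)
    have habs_le : |∑ j ∈ Finset.Icc 1 n, (K ((j:ℝ)/(m:ℝ)) - 1) * Cz (j:ℤ)|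
        ≤ ∑ j ∈ Finset.Icc 1 n, |(K ((j:ℝ)/(m:ℝ)) - 1) * Cz (j:ℤ)| :=
      Finset.abs_sum_le_sum_abs _ _
    have hchunk1 : ∑ j ∈ (Finset.Icc 1 n).filter (fun j => j ≤ N),
        |(K ((j:ℝ)/(m:ℝ)) - 1) * Cz (j:ℤ)| ≤ ε/(2*(A+1)) * A := by
      calc ∑ j ∈ (Finset.Icc 1 n).filter (fun j => j ≤ N),
          |(K ((j:ℝ)/(m:ℝ)) - 1) * Cz (j:ℤ)|
          ≤ ∑ j ∈ (Finset.Icc 1 n).filter (fun j => j ≤ N), ε/(2*(A+1)) * |Cz (j:ℤ)| := by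
            refine Finset.sum_le_sum fun j hj => ?_
            rw [Finset.mem_filter] at hj
            rw [abs_mul]
            exact mul_le_mul_of_nonneg_right (hsmall j hj.2) (abs_nonneg _)
        _ = ε/(2*(A+1)) * ∑ j ∈ (Finset.Icc 1 n).filter (fun j => j ≤ N), |Cz (j:ℤ)| := by
            rw [Finset.mul_sum]
        _ ≤ ε/(2*(A+1)) * A := by
            refine mul_le_mul_of_nonneg_left ?_ (by positivity)
            exact Summable.sum_le_tsum _ (fun j _ => abs_nonneg _) habs
    have hchunk2 : ∑ j ∈ (Finset.Icc 1 n).filter (fun j => ¬ j ≤ N),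
        |(K ((j:ℝ)/(m:ℝ)) - 1) * Cz (j:ℤ)| ≤ (M+1) * ∑' i : ℕ, |c1 (i + N)| := by
      have hsub : (Finset.Icc 1 n).filter (fun j => ¬ j ≤ N) ⊆ Finset.Icc (N+1) n := by
        intro j hj
        rw [Finset.mem_filter, Finset.mem_Icc] at hj
        rw [Finset.mem_Icc]
        omega
      calc ∑ j ∈ (Finset.Icc 1 n).filter (fun j => ¬ j ≤ N),
          |(K ((j:ℝ)/(m:ℝ)) - 1) * Cz (j:ℤ)|
          ≤ ∑ j ∈ (Finset.Icc 1 n).filter (fun j => ¬ j ≤ N), (M+1) * |Cz (j:ℤ)| := by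
            refine Finset.sum_le_sum fun j hj => ?_
            rw [abs_mul]
            refine mul_le_mul_of_nonneg_right ?_ (abs_nonneg _)
            calc |K ((j:ℝ)/(m:ℝ)) - 1| ≤ |K ((j:ℝ)/(m:ℝ))| + 1 := by
                  refine (abs_sub _ _).trans ?_
                  norm_num
              _ ≤ M + 1 := by linarith [hM1 ((j:ℝ)/(m:ℝ)) (by positivity)]
        _ ≤ ∑ j ∈ Finset.Icc (N+1) n, (M+1) * |Cz (j:ℤ)| := by
            refine Finset.sum_le_sum_of_subset_of_nonneg hsub fun j _ _ => ?_
            positivity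
        _ = (M+1) * ∑ j ∈ Finset.Icc (N+1) n, |Cz (j:ℤ)| := by rw [Finset.mul_sum]
        _ ≤ (M+1) * ∑' i : ℕ, |c1 (i + N)| := by
            refine mul_le_mul_of_nonneg_left ?_ (by linarith)
            rw [← Finset.Ico_add_one_right_eq_Icc, Finset.sum_Ico_eq_sum_range]
            have hconv : ∀ i ∈ Finset.range (n + 1 - (N+1)), |Cz ((N+1+i : ℕ):ℤ)| = |c1 (i+N)| := by
              intro i _
              simp only [hc1def]
              congr 2
              push_cast
              ring
            rw [Finset.sum_congr rfl hconv]
            exact Summable.sum_le_tsum _ (fun i _ => abs_nonneg _) ((summable_nat_add_iff N).mpr habs1)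
    have hNA : 0 < A + 1 := by linarith
    calc |∑ j ∈ Finset.Icc 1 n, (K ((j:ℝ)/(m:ℝ)) - 1) * Cz (j:ℤ)|
        ≤ ∑ j ∈ Finset.Icc 1 n, |(K ((j:ℝ)/(m:ℝ)) - 1) * Cz (j:ℤ)| := habs_le
      _ = (∑ j ∈ (Finset.Icc 1 n).filter (fun j => j ≤ N),
            |(K ((j:ℝ)/(m:ℝ)) - 1) * Cz (j:ℤ)|)
          + ∑ j ∈ (Finset.Icc 1 n).filter (fun j => ¬ j ≤ N),
            |(K ((j:ℝ)/(m:ℝ)) - 1) * Cz (j:ℤ)| := hsplit.symm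
      _ ≤ ε/(2*(A+1)) * A + (M+1) * ∑' i : ℕ, |c1 (i + N)| := add_le_add hchunk1 hchunk2
      _ < ε := by
          have h7 : (M+1) * ∑' i : ℕ, |c1 (i + N)| < (M+1) * (ε/(4*(M+1))) :=
            (mul_lt_mul_of_pos_left hN hM2)
          have h8 : (M+1) * (ε/(4*(M+1))) = ε/4 := by field_simp
          have h9 : ε/(2*(A+1)) * A < ε/2 := by
            rw [div_mul_eq_mul_div, div_lt_iff₀ (by positivity)]
            nlinarith
          linarith
  -- remainder tends to zero
  have hrem0 : Tendsto
      (fun q : ℕ × ℕ => ((∫ ω, hatSigmaSq X K q.1 q.2 ω ∂μ) - ∑' j : ℤ, Cz j)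
        - 2 * ∑ j ∈ Finset.Icc 1 q.2, (K ((j:ℝ)/(q.1:ℝ)) - 1) * Cz (j:ℤ))
      (atTop ×ˢ atTop) (𝓝 0) := by
    have hBn : Tendsto (fun q : ℕ × ℕ => (2*M*S + 2*S) / (q.2:ℝ)) (atTop ×ˢ atTop) (𝓝 0) := by
      have h := (tendsto_natCast_atTop_atTop (R := ℝ)).comp
        (tendsto_snd : Tendsto Prod.snd (atTop ×ˢ atTop : Filter (ℕ × ℕ)) atTop)
      simpa [div_eq_mul_inv] using h.inv_tendsto_atTop.const_mul (2*M*S + 2*S)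
    refine squeeze_zero_norm' ?_ hBn
    filter_upwards [(eventually_ge_atTop 1).prod_inr atTop] with q hq
    rw [Real.norm_eq_abs]
    exact hbound q.1 q.2 hq
  have := hrem0.add (hmain0.const_mul (2:ℝ))
  norm_num at this
  refine this.congr fun q => by ring
end

section
/- Let C: ℕ → ℝ and K: [0,∞) → ℝ be such that: K(0) = 1, K is continuous at 0, M = sup_{x≥0}|K(x)| < ∞; the limit k_q = lim_{x→0+} x^{−q}(K(x) − 1) exists for some q > 0; and Σ_{j=1}^∞ j^q·|C(j)| < ∞. Then m^q·Σ_{j=1}^n (K(j/m) − 1)·C(j) → k_q·Σ_{j=1}^∞ j^q·C(j) as m, n → ∞. -/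
open Filter
open scoped BigOperators Topology

/-- If `K(0) = 1`, `K` is continuous at `0` and bounded on `[0, ∞)`, the limit
`k_q = lim_{x→0+} x^{−q} (K(x) − 1)` exists for some `q > 0`, and `Σ_j j^q |C(j)| < ∞`, then
`m^q Σ_{j=1}^n (K(j/m) − 1) C(j) → k_q Σ_{j=1}^∞ j^q C(j)` as `m, n → ∞`. -/
theorem kernel_bias_rate (C : ℕ → ℝ) (K : ℝ → ℝ) (q kq M : ℝ)
    (hq : 0 < q)
    (hK0 : K 0 = 1)
    (hKcont : ContinuousWithinAt K (Set.Ici 0) 0)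
    (hM : ∀ x : ℝ, 0 ≤ x → |K x| ≤ M)
    (hkq : Tendsto (fun x : ℝ => (K x - 1) / x ^ q) (𝓝[>] 0) (𝓝 kq))
    (hCsum : Summable (fun j : ℕ => (j : ℝ) ^ q * |C j|)) :
    Tendsto
      (fun p : ℕ × ℕ =>
        (p.1 : ℝ) ^ q * ∑ j ∈ Finset.Icc 1 p.2, (K ((j : ℝ) / (p.1 : ℝ)) - 1) * C j)
      (atTop ×ˢ atTop) (𝓝 (kq * ∑' j : ℕ, (j : ℝ) ^ q * C j)) := by
  have hM1 : (1:ℝ) ≤ M := by simpa [hK0] using hM 0 le_rfl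
  set g : ℝ → ℝ := fun x => (K x - 1) / x ^ q with hgdef
  -- global bound on g on (0, ∞)
  obtain ⟨δ, hδ, hδ'⟩ : ∃ δ > 0, ∀ x : ℝ, 0 < x → x < δ → |g x - kq| < 1 := by
    obtain ⟨δ, hδ, h⟩ := Metric.tendsto_nhdsWithin_nhds.mp hkq 1 one_pos
    refine ⟨δ, hδ, fun x hx hxδ => ?_⟩
    have := h (x := x) hx (by simpa [Real.dist_eq, abs_of_pos hx] using hxδ)
    simpa [Real.dist_eq, hgdef] using this
  obtain ⟨B, hB0, hB⟩ : ∃ B : ℝ, 0 ≤ B ∧ ∀ x : ℝ, 0 < x → |g x| ≤ B := by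
    refine ⟨max (|kq| + 1) ((M + 1) / δ ^ q), le_max_of_le_left (by positivity),
      fun x hx => ?_⟩
    rcases lt_or_ge x δ with h | h
    · have h1 := hδ' x hx h
      have : |g x| ≤ |kq| + 1 := by
        have := abs_sub_abs_le_abs_sub (g x) kq
        linarith
      exact this.trans (le_max_left _ _)
    · have hxq : δ ^ q ≤ x ^ q := Real.rpow_le_rpow hδ.le h hq.le
      have hnum : |K x - 1| ≤ M + 1 := by
        have := hM x hx.le
        have := abs_sub (K x) 1
        calc |K x - 1| ≤ |K x| + |1| := abs_sub _ _
          _ ≤ M + 1 := by simp; linarith [hM x hx.le]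
      have hden : (0:ℝ) < δ ^ q := Real.rpow_pos_of_pos hδ q
      have : |g x| ≤ (M + 1) / δ ^ q := by
        rw [hgdef]
        simp only
        rw [abs_div, abs_of_nonneg (Real.rpow_nonneg hx.le q)]
        exact div_le_div₀ (by linarith) hnum hden hxq
      exact this.trans (le_max_right _ _)
  -- pointwise convergence
  have hpt : ∀ j : ℕ, 1 ≤ j →
      Tendsto (fun m : ℕ => g ((j : ℝ) / (m : ℝ))) atTop (𝓝 kq) := by
    intro j hj
    apply hkq.comp
    rw [tendsto_nhdsWithin_iff]
    constructor
    · exact tendsto_const_div_atTop_nhds_zero_nat _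
    · filter_upwards [eventually_gt_atTop 0] with m hm
      exact Set.mem_Ioi.mpr (div_pos (by exact_mod_cast hj) (by exact_mod_cast hm))
  -- summability facts
  have habs : ∀ j : ℕ, |(j : ℝ) ^ q * C j| = (j : ℝ) ^ q * |C j| := fun j => by
    rw [abs_mul, abs_of_nonneg (Real.rpow_nonneg (Nat.cast_nonneg j) q)]
  have hS : Summable (fun j : ℕ => (j : ℝ) ^ q * C j) := by
    apply Summable.of_abs
    exact hCsum.congr fun j => (habs j).symm
  set T : ℝ := ∑' j : ℕ, (j : ℝ) ^ q * |C j| with hTdef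
  set S : ℝ := ∑' j : ℕ, (j : ℝ) ^ q * C j with hSdef
  have hwnn : ∀ j : ℕ, 0 ≤ (j : ℝ) ^ q * |C j| := fun j =>
    mul_nonneg (Real.rpow_nonneg (Nat.cast_nonneg j) q) (abs_nonneg _)
  have hPleT : ∀ s : Finset ℕ, ∑ j ∈ s, (j : ℝ) ^ q * |C j| ≤ T :=
    fun s => Summable.sum_le_tsum s (fun j _ => hwnn j) hCsum
  have hT0 : 0 ≤ T := le_trans (by simp) (hPleT ∅)
  -- partial sums of |·| tend to T
  have hpartial : Tendsto (fun n : ℕ => ∑ j ∈ Finset.Icc 1 n, (j : ℝ) ^ q * |C j|)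
      atTop (𝓝 T) := by
    have h1 := hCsum.hasSum.tendsto_sum_nat
    have heq : ∀ n : ℕ, ∑ j ∈ Finset.Icc 1 n, (j : ℝ) ^ q * |C j|
        = ∑ j ∈ Finset.range (n + 1), (j : ℝ) ^ q * |C j| := by
      intro n
      rw [Finset.sum_range_succ' (fun j => (j : ℝ) ^ q * |C j|) n]
      rw [Nat.cast_zero, Real.zero_rpow hq.ne', zero_mul, add_zero]
      rw [← Finset.Ico_add_one_right_eq_Icc, Finset.sum_Ico_eq_sum_range]
      simp [add_comm]
    simp_rw [heq]
    exact h1.comp (tendsto_add_atTop_nat 1)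
  -- remainder bound
  have hrem : ∀ n : ℕ, |S - ∑ j ∈ Finset.Icc 1 n, (j : ℝ) ^ q * C j|
      ≤ T - ∑ j ∈ Finset.Icc 1 n, (j : ℝ) ^ q * |C j| := by
    intro n
    have h1 := Summable.sum_add_tsum_compl (s := Finset.Icc 1 n) hS
    have h2 := Summable.sum_add_tsum_compl (s := Finset.Icc 1 n) hCsum
    have hsub : Summable (fun j : ↑((↑(Finset.Icc 1 n) : Set ℕ)ᶜ) =>
        ‖((j : ℕ) : ℝ) ^ q * C j‖) := by
      refine (hCsum.subtype ((↑(Finset.Icc 1 n) : Set ℕ)ᶜ)).congr fun j => ?_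
      exact (habs j.1).symm
    have h3 : |∑' (j : ↑((↑(Finset.Icc 1 n) : Set ℕ)ᶜ)), ((j : ℕ) : ℝ) ^ q * C j|
        ≤ ∑' (j : ↑((↑(Finset.Icc 1 n) : Set ℕ)ᶜ)), ((j : ℕ) : ℝ) ^ q * |C j| := by
      have h4 := norm_tsum_le_tsum_norm hsub
      simp only [Real.norm_eq_abs, abs_mul] at h4
      refine h4.trans (le_of_eq (tsum_congr fun j => ?_))
      rw [abs_of_nonneg (Real.rpow_nonneg (Nat.cast_nonneg _) q)]
    have hS' : S - ∑ j ∈ Finset.Icc 1 n, (j : ℝ) ^ q * C j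
        = ∑' (j : ↑((↑(Finset.Icc 1 n) : Set ℕ)ᶜ)), ((j : ℕ) : ℝ) ^ q * C j := by
      rw [← hSdef] at h1
      linarith
    rw [hS']
    rw [← hTdef] at h2
    calc _ ≤ ∑' (j : ↑((↑(Finset.Icc 1 n) : Set ℕ)ᶜ)), ((j : ℕ) : ℝ) ^ q * |C j| := h3
      _ = T - ∑ j ∈ Finset.Icc 1 n, (j : ℝ) ^ q * |C j| := by linarith
  -- main ε argument
  rw [Metric.tendsto_nhds]
  intro ε hε
  set D : ℝ := B + |kq| + 1 with hDdef
  have hD : 0 < D := by positivity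
  obtain ⟨N, hN⟩ : ∃ N : ℕ, T - ∑ j ∈ Finset.Icc 1 N, (j : ℝ) ^ q * |C j| < ε / (3 * D) := by
    have h := hpartial.eventually (eventually_gt_nhds
      (show T - ε / (3 * D) < T by
        have h := div_pos hε (by positivity : (0:ℝ) < 3 * D)
        linarith))
    obtain ⟨N, hN⟩ := h.exists
    exact ⟨N, by linarith⟩
  have hev : ∀ᶠ m : ℕ in atTop, ∀ j ∈ Finset.Icc 1 N,
      |g ((j : ℝ) / (m : ℝ)) - kq| < ε / (3 * (T + 1)) := by
    rw [Filter.eventually_all_finset]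
    intro j hj
    have hj1 : 1 ≤ j := (Finset.mem_Icc.mp hj).1
    have := (Metric.tendsto_nhds.mp (hpt j hj1)) (ε / (3 * (T + 1))) (by positivity)
    filter_upwards [this] with m hm
    simpa [Real.dist_eq] using hm
  obtain ⟨m₀, hm₀⟩ := eventually_atTop.mp hev
  filter_upwards [(eventually_ge_atTop (max m₀ 1)).prod_mk (eventually_ge_atTop N)]
    with p hp
  obtain ⟨hm, hn⟩ := hp
  set m : ℕ := p.1
  set n : ℕ := p.2
  have hm1 : 1 ≤ m := le_trans (le_max_right _ _) hm
  have hmm₀ : m₀ ≤ m := le_trans (le_max_left _ _) hm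
  have hm' : (0:ℝ) < (m : ℝ) := by exact_mod_cast hm1
  -- rewrite the sum
  have hrw : (m : ℝ) ^ q * ∑ j ∈ Finset.Icc 1 n, (K ((j : ℝ) / (m : ℝ)) - 1) * C j
      = ∑ j ∈ Finset.Icc 1 n, g ((j : ℝ) / (m : ℝ)) * ((j : ℝ) ^ q * C j) := by
    rw [Finset.mul_sum]
    refine Finset.sum_congr rfl fun j hj => ?_
    have hj1 : 1 ≤ j := (Finset.mem_Icc.mp hj).1
    have hj' : (0:ℝ) < (j : ℝ) := by exact_mod_cast hj1
    have hjq : (0:ℝ) < (j : ℝ) ^ q := Real.rpow_pos_of_pos hj' q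
    have hmq : (0:ℝ) < (m : ℝ) ^ q := Real.rpow_pos_of_pos hm' q
    rw [hgdef]
    simp only
    rw [Real.div_rpow (Nat.cast_nonneg j) (Nat.cast_nonneg m)]
    field_simp
  rw [Real.dist_eq, hrw]
  -- decomposition
  have key : (∑ j ∈ Finset.Icc 1 n, g ((j : ℝ) / (m : ℝ)) * ((j : ℝ) ^ q * C j)) - kq * S
      = (∑ j ∈ Finset.Icc 1 n, (g ((j : ℝ) / (m : ℝ)) - kq) * ((j : ℝ) ^ q * C j))
        + kq * ((∑ j ∈ Finset.Icc 1 n, (j : ℝ) ^ q * C j) - S) := by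
    simp only [sub_mul, Finset.sum_sub_distrib, ← Finset.mul_sum]
    ring
  rw [key]
  -- bounds
  have hPmono : ∑ j ∈ Finset.Icc 1 N, (j : ℝ) ^ q * |C j|
      ≤ ∑ j ∈ Finset.Icc 1 n, (j : ℝ) ^ q * |C j| :=
    Finset.sum_le_sum_of_subset_of_nonneg (Finset.Icc_subset_Icc_right hn)
      (fun j _ _ => hwnn j)
  have hsum1 : |∑ j ∈ Finset.Icc 1 n, (g ((j : ℝ) / (m : ℝ)) - kq) * ((j : ℝ) ^ q * C j)|
      ≤ ε / (3 * (T + 1)) * T + D * (T - ∑ j ∈ Finset.Icc 1 N, (j : ℝ) ^ q * |C j|) := by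
    calc |∑ j ∈ Finset.Icc 1 n, (g ((j : ℝ) / (m : ℝ)) - kq) * ((j : ℝ) ^ q * C j)|
        ≤ ∑ j ∈ Finset.Icc 1 n, |(g ((j : ℝ) / (m : ℝ)) - kq) * ((j : ℝ) ^ q * C j)| :=
          Finset.abs_sum_le_sum_abs _ _
      _ = ∑ j ∈ Finset.Icc 1 n, |g ((j : ℝ) / (m : ℝ)) - kq| * ((j : ℝ) ^ q * |C j|) := by
          refine Finset.sum_congr rfl fun j _ => ?_
          rw [abs_mul, habs j]
      _ = (∑ j ∈ Finset.Icc 1 n \ Finset.Icc 1 N,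
              |g ((j : ℝ) / (m : ℝ)) - kq| * ((j : ℝ) ^ q * |C j|))
          + ∑ j ∈ Finset.Icc 1 N,
              |g ((j : ℝ) / (m : ℝ)) - kq| * ((j : ℝ) ^ q * |C j|) :=
          (Finset.sum_sdiff (Finset.Icc_subset_Icc_right hn)).symm
      _ ≤ (∑ j ∈ Finset.Icc 1 n \ Finset.Icc 1 N, D * ((j : ℝ) ^ q * |C j|))
          + ∑ j ∈ Finset.Icc 1 N, ε / (3 * (T + 1)) * ((j : ℝ) ^ q * |C j|) := by
          refine add_le_add (Finset.sum_le_sum fun j hj => ?_)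
            (Finset.sum_le_sum fun j hj => ?_)
          · have hj1 : 1 ≤ j := (Finset.mem_Icc.mp (Finset.mem_sdiff.mp hj).1).1
            have hj' : (0:ℝ) < (j : ℝ) := by exact_mod_cast hj1
            have hBj := hB ((j : ℝ) / (m : ℝ)) (div_pos hj' hm')
            have habs2 : |g ((j : ℝ) / (m : ℝ)) - kq| ≤ D := by
              calc |g ((j : ℝ) / (m : ℝ)) - kq| ≤ |g ((j : ℝ) / (m : ℝ))| + |kq| :=
                  abs_sub _ _
                _ ≤ D := by rw [hDdef]; linarith
            exact mul_le_mul_of_nonneg_right habs2 (hwnn j)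
          · exact mul_le_mul_of_nonneg_right (hm₀ m hmm₀ j hj).le (hwnn j)
      _ = D * (∑ j ∈ Finset.Icc 1 n \ Finset.Icc 1 N, (j : ℝ) ^ q * |C j|)
          + ε / (3 * (T + 1)) * ∑ j ∈ Finset.Icc 1 N, (j : ℝ) ^ q * |C j| := by
          rw [Finset.mul_sum, Finset.mul_sum]
      _ ≤ D * (T - ∑ j ∈ Finset.Icc 1 N, (j : ℝ) ^ q * |C j|)
          + ε / (3 * (T + 1)) * T := by
          have hsd : ∑ j ∈ Finset.Icc 1 n \ Finset.Icc 1 N, (j : ℝ) ^ q * |C j|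
              ≤ T - ∑ j ∈ Finset.Icc 1 N, (j : ℝ) ^ q * |C j| := by
            have h5 := Finset.sum_sdiff (s₁ := Finset.Icc 1 N) (s₂ := Finset.Icc 1 n)
              (f := fun j : ℕ => (j : ℝ) ^ q * |C j|) (Finset.Icc_subset_Icc_right hn)
            have h6 := hPleT (Finset.Icc 1 n)
            linarith
          exact add_le_add (mul_le_mul_of_nonneg_left hsd hD.le)
            (mul_le_mul_of_nonneg_left (hPleT _) (by positivity))
      _ = _ := by ring
  have hsum2 : |kq * ((∑ j ∈ Finset.Icc 1 n, (j : ℝ) ^ q * C j) - S)|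
      ≤ D * (T - ∑ j ∈ Finset.Icc 1 N, (j : ℝ) ^ q * |C j|) := by
    rw [abs_mul, abs_sub_comm]
    have h1 := hrem n
    have h2 : |kq| ≤ D := by rw [hDdef]; linarith [abs_nonneg kq]
    have h3 : (0:ℝ) ≤ T - ∑ j ∈ Finset.Icc 1 n, (j : ℝ) ^ q * |C j| := by
      have := hPleT (Finset.Icc 1 n); linarith
    calc |kq| * |S - ∑ j ∈ Finset.Icc 1 n, (j : ℝ) ^ q * C j|
        ≤ D * (T - ∑ j ∈ Finset.Icc 1 n, (j : ℝ) ^ q * |C j|) :=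
          mul_le_mul h2 h1 (abs_nonneg _) hD.le
      _ ≤ D * (T - ∑ j ∈ Finset.Icc 1 N, (j : ℝ) ^ q * |C j|) := by
          exact mul_le_mul_of_nonneg_left (by linarith [hPmono]) hD.le
  have hfrac : ε / (3 * (T + 1)) * T < ε / 3 := by
    rw [div_mul_eq_mul_div, div_lt_div_iff₀ (by positivity) (by norm_num)]
    nlinarith
  have hDpart : D * (T - ∑ j ∈ Finset.Icc 1 N, (j : ℝ) ^ q * |C j|) < ε / 3 := by
    have := (mul_lt_mul_iff_right₀ hD).mpr hN
    calc D * (T - ∑ j ∈ Finset.Icc 1 N, (j : ℝ) ^ q * |C j|)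
        < D * (ε / (3 * D)) := this
      _ = ε / 3 := by field_simp
  calc |(∑ j ∈ Finset.Icc 1 n, (g ((j : ℝ) / (m : ℝ)) - kq) * ((j : ℝ) ^ q * C j))
        + kq * ((∑ j ∈ Finset.Icc 1 n, (j : ℝ) ^ q * C j) - S)|
      ≤ |∑ j ∈ Finset.Icc 1 n, (g ((j : ℝ) / (m : ℝ)) - kq) * ((j : ℝ) ^ q * C j)|
        + |kq * ((∑ j ∈ Finset.Icc 1 n, (j : ℝ) ^ q * C j) - S)| := abs_add_le _ _
    _ ≤ (ε / (3 * (T + 1)) * T + D * (T - ∑ j ∈ Finset.Icc 1 N, (j : ℝ) ^ q * |C j|))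
        + D * (T - ∑ j ∈ Finset.Icc 1 N, (j : ℝ) ^ q * |C j|) :=
        add_le_add hsum1 hsum2
    _ < ε / 3 + ε / 3 + ε / 3 := by linarith
    _ = ε := by ring
end

section
/- Let {X_k}_{k≥1} be a martingale difference sequence (with respect to its natural filtration) with E[X_k] = 0, E[X_k²] ≤ 1, and Φ₀ = sup_k E[X_k⁴] < ∞. Then there is a universal constant C > 0 such that for every p ≥ 1 and every p×p real matrix A with zero diagonal, Var(X_pᵀ A X_p) ≤ C·Φ₀·tr(A Aᵀ), where X_p = (X_1,…,X_p). -/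
open MeasureTheory Filter Matrix
open scoped BigOperators Topology

open scoped ENNReal NNReal

section Helpers

variable {Ω : Type*} [MeasurableSpace Ω] {μ : Measure Ω} [IsProbabilityMeasure μ]

lemma memLp2_mul {f g : Ω → ℝ} (hf : MemLp f 4 μ) (hg : MemLp g 4 μ) :
    MemLp (fun ω => f ω * g ω) 2 μ := by
  have h := MemLp.smul (𝕜 := ℝ) hg hf (p := 4) (q := 4) (r := 2) (hpqr := ⟨by rw [← two_mul, show (4:ℝ≥0∞) = 2*2 by norm_num, ENNReal.mul_inv (by simp) (by simp), ← mul_assoc, ENNReal.mul_inv_cancel (by simp) (by simp), one_mul]⟩)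
  exact h

lemma integrable_mul2 {f g : Ω → ℝ} (hf : MemLp f 2 μ) (hg : MemLp g 2 μ) :
    Integrable (fun ω => f ω * g ω) μ := by
  have h := MemLp.smul (𝕜 := ℝ) hg hf (p := 2) (q := 2) (r := 1) (hpqr := ⟨by rw [ENNReal.inv_two_add_inv_two, inv_one]⟩)
  have heq : (f • g) = fun ω => f ω * g ω := by funext ω; simp [smul_eq_mul, mul_comm]
  rw [heq] at h
  exact memLp_one_iff_integrable.mp h

lemma integrable_mul4 {f g h k : Ω → ℝ} (hf : MemLp f 4 μ) (hg : MemLp g 4 μ)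
    (hh : MemLp h 4 μ) (hk : MemLp k 4 μ) :
    Integrable (fun ω => f ω * g ω * (h ω * k ω)) μ :=
  integrable_mul2 (memLp2_mul hf hg) (memLp2_mul hh hk)

lemma cs_nonneg {f g : Ω → ℝ} (hf : MemLp f 2 μ) (hg : MemLp g 2 μ)
    (hf0 : 0 ≤ f) (hg0 : 0 ≤ g) :
    ∫ ω, f ω * g ω ∂μ ≤ Real.sqrt (∫ ω, f ω ^ 2 ∂μ) * Real.sqrt (∫ ω, g ω ^ 2 ∂μ) := by
  have hpq : Real.HolderConjugate 2 2 := .two_two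
  have h2 : (ENNReal.ofReal (2:ℝ)) = 2 := by norm_num
  have h := MeasureTheory.integral_mul_le_Lp_mul_Lq_of_nonneg hpq
      (Filter.Eventually.of_forall hf0) (Filter.Eventually.of_forall hg0)
      (h2 ▸ hf) (h2 ▸ hg)
  have hrw : ∀ (F : Ω → ℝ), (∫ ω, F ω ^ (2:ℝ) ∂μ) ^ (1/2 : ℝ)
      = Real.sqrt (∫ ω, F ω ^ 2 ∂μ) := by
    intro F
    rw [Real.sqrt_eq_rpow]
    congr 1
    refine integral_congr_ae (Filter.Eventually.of_forall fun ω => ?_)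
    show F ω ^ (2:ℝ) = F ω ^ (2:ℕ)
    rw [show (2:ℝ)=((2:ℕ):ℝ) by norm_num, Real.rpow_natCast]
  calc ∫ ω, f ω * g ω ∂μ ≤ (∫ ω, f ω ^ (2:ℝ) ∂μ) ^ (1/2:ℝ) * (∫ ω, g ω ^ (2:ℝ) ∂μ) ^ (1/2:ℝ) := h
    _ = _ := by rw [hrw, hrw]

lemma cs_abs {f g : Ω → ℝ} (hf : MemLp f 2 μ) (hg : MemLp g 2 μ) :
    |∫ ω, f ω * g ω ∂μ| ≤ Real.sqrt (∫ ω, f ω ^ 2 ∂μ) * Real.sqrt (∫ ω, g ω ^ 2 ∂μ) := by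
  have h1 : |∫ ω, f ω * g ω ∂μ| ≤ ∫ ω, |f ω| * |g ω| ∂μ := by
    simpa [Real.norm_eq_abs, abs_mul] using
      norm_integral_le_integral_norm (μ := μ) (f := fun ω => f ω * g ω)
  have h2 := cs_nonneg (f := fun ω => |f ω|) (g := fun ω => |g ω|)
      (hf.abs) (hg.abs) (fun ω => abs_nonneg _) (fun ω => abs_nonneg _)
  simp only [sq_abs] at h2
  exact h1.trans h2

end Helpers
section MDS

variable {Ω : Type*} [MeasurableSpace Ω] {μ : Measure Ω} [IsProbabilityMeasure μ]

/-- natural filtration σ-algebra at time `k` -/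
def natSigma (X : ℕ → Ω → ℝ) (k : ℕ) : MeasurableSpace Ω :=
  MeasurableSpace.comap (fun ω => (fun i : Fin k => X i ω)) MeasurableSpace.pi

lemma natSigma_le {X : ℕ → Ω → ℝ} (hXm : ∀ k, Measurable (X k)) (k : ℕ) :
    natSigma X k ≤ ‹MeasurableSpace Ω› := by
  rintro s ⟨t, ht, rfl⟩
  exact (measurable_pi_lambda _ (fun i : Fin k => hXm i)) ht

lemma measurable_natSigma_X {X : ℕ → Ω → ℝ} {i k : ℕ} (hik : i < k) :
    Measurable[natSigma X k] (X i) := by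
  have hπ : Measurable[natSigma X k] (fun ω => (fun j : Fin k => X j ω)) :=
    Measurable.of_comap_le le_rfl
  exact (measurable_pi_apply (⟨i, hik⟩ : Fin k)).comp hπ

/-- key orthogonality: if `f` is measurable w.r.t. the past and `f * X k` is integrable,
then `E[f X_k] = 0`. -/
lemma integral_mul_Xk_eq_zero {X : ℕ → Ω → ℝ} (hXm : ∀ k, Measurable (X k))
    (hmds : ∀ k : ℕ, μ[X k | natSigma X k] =ᵐ[μ] 0)
    (k : ℕ) {f : Ω → ℝ} (hfm : Measurable[natSigma X k] f)
    (hint : Integrable (fun ω => f ω * X k ω) μ) (hX1 : Integrable (X k) μ) :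
    ∫ ω, f ω * X k ω ∂μ = 0 := by
  have hm : natSigma X k ≤ ‹MeasurableSpace Ω› := natSigma_le hXm k
  have hmul : μ[f * X k | natSigma X k] =ᵐ[μ] f * μ[X k | natSigma X k] :=
    condExp_mul_of_stronglyMeasurable_left hfm.stronglyMeasurable hint hX1
  have hzero : μ[f * X k | natSigma X k] =ᵐ[μ] 0 := by
    refine hmul.trans ?_
    filter_upwards [hmds k] with ω hω
    simp [hω]
  have h1 : ∫ ω, (μ[f * X k | natSigma X k]) ω ∂μ = ∫ ω, (f * X k) ω ∂μ :=
    integral_condExp hm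
  have h2 : ∫ ω, (μ[f * X k | natSigma X k]) ω ∂μ = 0 := by
    rw [integral_congr_ae hzero]; simp
  have : ∫ ω, (f * X k) ω ∂μ = 0 := by rw [← h1, h2]
  simpa using this

variable {X : ℕ → Ω → ℝ} {Φ : ℝ}

/-- partial weighted sums of the MDS -/
def MS (X : ℕ → Ω → ℝ) (c : ℕ → ℝ) (n : ℕ) (ω : Ω) : ℝ :=
  ∑ i ∈ Finset.range n, c i * X i ω

lemma memLp4_MS (hX4 : ∀ k, MemLp (X k) 4 μ) (c : ℕ → ℝ) (n : ℕ) :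
    MemLp (MS X c n) 4 μ := by
  have : ∀ i ∈ Finset.range n, MemLp (fun ω => c i * X i ω) 4 μ :=
    fun i _ => (hX4 i).const_mul (c i)
  exact memLp_finsetSum (Finset.range n) this

lemma measurable_natSigma_MS (c : ℕ → ℝ) {n k : ℕ} (hnk : n ≤ k) :
    Measurable[natSigma X k] (MS X c n) := by
  apply Finset.measurable_sum
  intro i hi
  have : i < k := lt_of_lt_of_le (Finset.mem_range.mp hi) hnk
  exact (measurable_natSigma_X this).const_mul (c i)

lemma Phi_nonneg (hX4 : ∀ k, MemLp (X k) 4 μ) (hΦ : ∀ k, ∫ ω, (X k ω) ^ 4 ∂μ ≤ Φ) :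
    0 ≤ Φ :=
  le_trans (integral_nonneg (fun ω => by positivity)) (hΦ 0)

lemma integrable_pow4 {f : Ω → ℝ} (hf : MemLp f 4 μ) :
    Integrable (fun ω => f ω ^ 4) μ := by
  have := integrable_mul4 hf hf hf hf
  refine this.congr ?_
  filter_upwards with ω
  ring

end MDS
section Fourth

variable {Ω : Type*} [MeasurableSpace Ω] {μ : Measure Ω} [IsProbabilityMeasure μ]
variable {X : ℕ → Ω → ℝ} {Φ : ℝ}

lemma integral_fun_congr {f g : Ω → ℝ} (h : ∀ ω, f ω = g ω) :
    ∫ ω, f ω ∂μ = ∫ ω, g ω ∂μ :=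
  integral_congr_ae (Filter.Eventually.of_forall h)

lemma fourth_moment_MS (hXm : ∀ k, Measurable (X k)) (hX4 : ∀ k, MemLp (X k) 4 μ)
    (hΦ : ∀ k, ∫ ω, (X k ω) ^ 4 ∂μ ≤ Φ)
    (hmds : ∀ k : ℕ, μ[X k | natSigma X k] =ᵐ[μ] 0) (c : ℕ → ℝ) :
    ∀ n, ∫ ω, (MS X c n ω) ^ 4 ∂μ ≤ 16 * Φ * (∑ i ∈ Finset.range n, (c i) ^ 2) ^ 2 := by
  have hΦ0 : 0 ≤ Φ := Phi_nonneg hX4 hΦ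
  intro n
  induction n with
  | zero => simp [MS]
  | succ n IH =>
    set f : Ω → ℝ := MS X c n with hfdef
    set b : ℝ := c n with hbdef
    set g : Ω → ℝ := X n with hgdef
    set s : ℝ := ∑ i ∈ Finset.range n, (c i) ^ 2 with hsdef
    have hs0 : 0 ≤ s := Finset.sum_nonneg fun i _ => sq_nonneg _
    have hf4 : MemLp f 4 μ := memLp4_MS hX4 c n
    have hg4 : MemLp g 4 μ := hX4 n
    -- integrability of all pieces
    have I0 : Integrable (fun ω => g ω ^ 4) μ := integrable_pow4 hg4
    have I4 : Integrable (fun ω => f ω ^ 4) μ := integrable_pow4 hf4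
    have I1 : Integrable (fun ω => f ω ^ 3 * g ω) μ := by
      refine (integrable_mul4 hf4 hf4 hf4 hg4).congr ?_
      filter_upwards with ω; ring
    have I2 : Integrable (fun ω => f ω ^ 2 * g ω ^ 2) μ := by
      refine (integrable_mul4 hf4 hf4 hg4 hg4).congr ?_
      filter_upwards with ω; ring
    have I3 : Integrable (fun ω => f ω * g ω ^ 3) μ := by
      refine (integrable_mul4 hf4 hg4 hg4 hg4).congr ?_
      filter_upwards with ω; ring
    -- expansion of the integral
    set Ef : ℝ := ∫ ω, f ω ^ 4 ∂μ with hEf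
    set Eg : ℝ := ∫ ω, g ω ^ 4 ∂μ with hEg
    set T3 : ℝ := ∫ ω, f ω ^ 3 * g ω ∂μ with hT3def
    set T2 : ℝ := ∫ ω, f ω ^ 2 * g ω ^ 2 ∂μ with hT2def
    set T1 : ℝ := ∫ ω, f ω * g ω ^ 3 ∂μ with hT1def
    have hexp : ∫ ω, (MS X c (n + 1) ω) ^ 4 ∂μ
        = Ef + 4 * b * T3 + 6 * b ^ 2 * T2 + 4 * b ^ 3 * T1 + b ^ 4 * Eg := by
      have hstep : (fun ω => (MS X c (n + 1) ω) ^ 4)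
          = fun ω => f ω ^ 4 + ((4 * b) * (f ω ^ 3 * g ω)
            + ((6 * b ^ 2) * (f ω ^ 2 * g ω ^ 2)
            + ((4 * b ^ 3) * (f ω * g ω ^ 3) + (b ^ 4) * (g ω ^ 4)))) := by
        funext ω
        have : MS X c (n + 1) ω = f ω + b * g ω := by
          simp [MS, Finset.sum_range_succ, hfdef, hbdef, hgdef]
        rw [this]; ring
      rw [hstep]
      have I34 : Integrable (fun ω => (4 * b ^ 3) * (f ω * g ω ^ 3) + (b ^ 4) * (g ω ^ 4)) μ :=
        (I3.const_mul (4 * b ^ 3)).add (I0.const_mul (b ^ 4))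
      have I234 : Integrable (fun ω => (6 * b ^ 2) * (f ω ^ 2 * g ω ^ 2)
          + ((4 * b ^ 3) * (f ω * g ω ^ 3) + (b ^ 4) * (g ω ^ 4))) μ :=
        (I2.const_mul (6 * b ^ 2)).add I34
      have I1234 : Integrable (fun ω => (4 * b) * (f ω ^ 3 * g ω)
          + ((6 * b ^ 2) * (f ω ^ 2 * g ω ^ 2)
          + ((4 * b ^ 3) * (f ω * g ω ^ 3) + (b ^ 4) * (g ω ^ 4)))) μ :=
        (I1.const_mul (4 * b)).add I234
      rw [integral_add I4 I1234, integral_add (I1.const_mul (4 * b)) I234,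
        integral_add (I2.const_mul (6 * b ^ 2)) I34,
        integral_add (I3.const_mul (4 * b ^ 3)) (I0.const_mul (b ^ 4)),
        integral_const_mul, integral_const_mul, integral_const_mul, integral_const_mul]
      ring
    -- the martingale term vanishes
    have hT3 : T3 = 0 := by
      refine integral_mul_Xk_eq_zero hXm hmds n
        (f := fun ω => f ω ^ 3) ?_ I1 (hg4.integrable (by norm_num))
      exact (measurable_natSigma_MS c (le_refl n)).pow_const 3
    -- basic bounds
    have hEf0 : 0 ≤ Ef := integral_nonneg fun ω => by positivity
    have hEg0 : 0 ≤ Eg := integral_nonneg fun ω => by positivity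
    have hEgΦ : Eg ≤ Φ := hΦ n
    have hT20 : 0 ≤ T2 := integral_nonneg fun ω => by positivity
    have hIH : Ef ≤ 16 * Φ * s ^ 2 := IH
    -- Cauchy-Schwarz for T2
    have hF2 : MemLp (fun ω => f ω ^ 2) 2 μ := by
      have h := memLp2_mul hf4 hf4
      have : (fun ω => f ω * f ω) = fun ω => f ω ^ 2 := by funext ω; ring
      rwa [this] at h
    have hG2 : MemLp (fun ω => g ω ^ 2) 2 μ := by
      have h := memLp2_mul hg4 hg4
      have : (fun ω => g ω * g ω) = fun ω => g ω ^ 2 := by funext ω; ring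
      rwa [this] at h
    have hFG : MemLp (fun ω => f ω * g ω) 2 μ := memLp2_mul hf4 hg4
    have hcs2 : T2 ≤ Real.sqrt Ef * Real.sqrt Eg := by
      have h := cs_nonneg hF2 hG2 (fun ω => sq_nonneg _) (fun ω => sq_nonneg _)
      have e1 : ∫ ω, (f ω ^ 2) ^ 2 ∂μ = Ef := integral_fun_congr fun ω => by ring
      have e2 : ∫ ω, (g ω ^ 2) ^ 2 ∂μ = Eg := integral_fun_congr fun ω => by ring
      rwa [e1, e2] at h
    -- Cauchy-Schwarz for T1
    have hcs1 : |T1| ≤ Real.sqrt T2 * Real.sqrt Eg := by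
      have h := cs_abs hFG hG2
      have e0 : ∫ ω, (f ω * g ω) * g ω ^ 2 ∂μ = T1 := integral_fun_congr fun ω => by ring
      have e1 : ∫ ω, (f ω * g ω) ^ 2 ∂μ = T2 := integral_fun_congr fun ω => by ring
      have e2 : ∫ ω, (g ω ^ 2) ^ 2 ∂μ = Eg := integral_fun_congr fun ω => by ring
      rwa [e0, e1, e2] at h
    -- numeric bounds with square roots
    set r : ℝ := Real.sqrt s with hrdef
    have hr0 : 0 ≤ r := Real.sqrt_nonneg _
    have hrs : r ^ 2 = s := Real.sq_sqrt hs0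
    have hsqEf : Real.sqrt Ef ≤ 4 * Real.sqrt Φ * s := by
      have h1 : Real.sqrt Ef ≤ Real.sqrt (16 * Φ * s ^ 2) := Real.sqrt_le_sqrt hIH
      have h2 : Real.sqrt (16 * Φ * s ^ 2) = 4 * Real.sqrt Φ * s := by
        rw [show 16 * Φ * s ^ 2 = (4 * Real.sqrt Φ * s) ^ 2 by
          rw [mul_pow, mul_pow, Real.sq_sqrt hΦ0]; ring]
        exact Real.sqrt_sq (by positivity)
      linarith [h1, h2.le, h2.ge]
    have hsqEg : Real.sqrt Eg ≤ Real.sqrt Φ := Real.sqrt_le_sqrt hEgΦ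
    have hsqΦ : Real.sqrt Φ * Real.sqrt Φ = Φ := Real.mul_self_sqrt hΦ0
    have hT2b : T2 ≤ 4 * Φ * s := by
      have h1 : Real.sqrt Ef * Real.sqrt Eg ≤ (4 * Real.sqrt Φ * s) * Real.sqrt Φ :=
        mul_le_mul hsqEf hsqEg (Real.sqrt_nonneg _) (by positivity)
      have h2 : (4 * Real.sqrt Φ * s) * Real.sqrt Φ = 4 * Φ * s := by
        rw [show (4 * Real.sqrt Φ * s) * Real.sqrt Φ
          = 4 * (Real.sqrt Φ * Real.sqrt Φ) * s by ring, hsqΦ]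
      linarith [hcs2]
    have hsqT2 : Real.sqrt T2 ≤ 2 * Real.sqrt Φ * r := by
      have h1 : Real.sqrt T2 ≤ Real.sqrt (4 * Φ * s) := Real.sqrt_le_sqrt hT2b
      have h2 : Real.sqrt (4 * Φ * s) = 2 * Real.sqrt Φ * r := by
        rw [show 4 * Φ * s = (2 * Real.sqrt Φ * r) ^ 2 by
          rw [mul_pow, mul_pow, Real.sq_sqrt hΦ0, hrs]; ring]
        exact Real.sqrt_sq (by positivity)
      linarith
    have hT1b : |T1| ≤ 2 * Φ * r := by
      have h := hcs1.trans (mul_le_mul hsqT2 hsqEg (Real.sqrt_nonneg _) (by positivity))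
      calc |T1| ≤ 2 * Real.sqrt Φ * r * Real.sqrt Φ := h
        _ = 2 * Φ * r := by rw [show 2 * Real.sqrt Φ * r * Real.sqrt Φ
              = 2 * (Real.sqrt Φ * Real.sqrt Φ) * r by ring, hsqΦ]
    -- combine
    have habs3 : 4 * b ^ 3 * T1 ≤ 4 * |b| ^ 3 * |T1| := by
      calc 4 * b ^ 3 * T1 ≤ |4 * b ^ 3 * T1| := le_abs_self _
        _ = 4 * |b| ^ 3 * |T1| := by
            rw [abs_mul, abs_mul, abs_pow]
            norm_num
    have hC : 4 * b ^ 3 * T1 ≤ 4 * |b| ^ 3 * (2 * Φ * r) :=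
      habs3.trans (mul_le_mul_of_nonneg_left hT1b (by positivity))
    have hb3 : |b| ^ 3 = b ^ 2 * |b| := by
      rw [pow_succ, sq_abs]
    have hbr : 2 * |b| * r ≤ b ^ 2 + s := by
      nlinarith [sq_nonneg (|b| - r), sq_abs b, hrs]
    have hC2 : 4 * b ^ 3 * T1 ≤ 4 * Φ * b ^ 2 * (b ^ 2 + s) := by
      have h1 : 4 * |b| ^ 3 * (2 * Φ * r) = 4 * Φ * b ^ 2 * (2 * |b| * r) := by
        rw [hb3]; ring
      have h2 : 4 * Φ * b ^ 2 * (2 * |b| * r) ≤ 4 * Φ * b ^ 2 * (b ^ 2 + s) :=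
        mul_le_mul_of_nonneg_left hbr (by positivity)
      linarith [hC]
    have hsum : ∑ i ∈ Finset.range (n + 1), (c i) ^ 2 = s + b ^ 2 := by
      rw [Finset.sum_range_succ]
    rw [hexp, hT3, hsum]
    have k1 : 6 * b ^ 2 * T2 ≤ 24 * (Φ * s * b ^ 2) := by
      have := mul_le_mul_of_nonneg_left hT2b (show (0:ℝ) ≤ 6 * b ^ 2 by positivity)
      linarith [this, (by ring : 6 * b ^ 2 * (4 * Φ * s) = 24 * (Φ * s * b ^ 2))]
    have k2 : b ^ 4 * Eg ≤ Φ * b ^ 4 := by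
      have := mul_le_mul_of_nonneg_left hEgΦ (show (0:ℝ) ≤ b ^ 4 by positivity)
      linarith [this, (by ring : b ^ 4 * Φ = Φ * b ^ 4)]
    have k3 : 4 * b ^ 3 * T1 ≤ 4 * (Φ * b ^ 4) + 4 * (Φ * s * b ^ 2) := by
      have := hC2
      linarith [this, (by ring : 4 * Φ * b ^ 2 * (b ^ 2 + s)
        = 4 * (Φ * b ^ 4) + 4 * (Φ * s * b ^ 2))]
    have p1 : 0 ≤ Φ * s * b ^ 2 := by positivity
    have p2 : 0 ≤ Φ * b ^ 4 := by positivity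
    have expand : 16 * Φ * (s + b ^ 2) ^ 2
        = 16 * Φ * s ^ 2 + 32 * (Φ * s * b ^ 2) + 16 * (Φ * b ^ 4) := by ring
    rw [expand]
    linarith [hIH, k1, k2, k3, p1, p2]

end Fourth
section Quad

lemma quad_identity (p : ℕ) (a : ℕ → ℕ → ℝ) (hdiag : ∀ i, a i i = 0) (x : ℕ → ℝ) :
    ∑ i ∈ Finset.range p, ∑ j ∈ Finset.range p, a i j * x i * x j
      = ∑ j ∈ Finset.range p, x j * (∑ i ∈ Finset.range j, (a i j + a j i) * x i) := by
  have hR : ∀ j ∈ Finset.range p,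
      x j * (∑ i ∈ Finset.range j, (a i j + a j i) * x i)
        = ∑ i ∈ Finset.range p, ((if i < j then a i j * x i * x j else 0)
            + (if i < j then a j i * x i * x j else 0)) := by
    intro j hj
    have hsub : Finset.range j = (Finset.range p).filter (· < j) := by
      ext i
      simp only [Finset.mem_range, Finset.mem_filter]
      have := Finset.mem_range.mp hj
      omega
    rw [Finset.mul_sum, hsub, Finset.sum_filter]
    refine Finset.sum_congr rfl fun i _ => ?_
    split_ifs with h
    · ring
    · ring
  rw [Finset.sum_congr rfl hR]
  rw [Finset.sum_congr rfl (fun j (_ : j ∈ Finset.range p) => Finset.sum_add_distrib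
    (s := Finset.range p)
    (f := fun i => if i < j then a i j * x i * x j else 0)
    (g := fun i => if i < j then a j i * x i * x j else 0))]
  rw [Finset.sum_add_distrib]
  -- second piece: rename bound variables (alpha) and commute multiplication
  have hswap : ∑ j ∈ Finset.range p, ∑ i ∈ Finset.range p,
        (if i < j then a j i * x i * x j else 0)
      = ∑ i ∈ Finset.range p, ∑ j ∈ Finset.range p,
        (if j < i then a i j * x i * x j else 0) := by
    refine Finset.sum_congr rfl fun v _ => Finset.sum_congr rfl fun w _ => ?_
    split_ifs with h
    · ring
    · rfl
  have hfirst : ∑ j ∈ Finset.range p, ∑ i ∈ Finset.range p,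
        (if i < j then a i j * x i * x j else 0)
      = ∑ i ∈ Finset.range p, ∑ j ∈ Finset.range p,
        (if i < j then a i j * x i * x j else 0) := Finset.sum_comm
  rw [hswap, hfirst, ← Finset.sum_add_distrib]
  rw [Finset.sum_congr rfl (fun i (_ : i ∈ Finset.range p) =>
    (Finset.sum_add_distrib (s := Finset.range p)
      (f := fun j => if i < j then a i j * x i * x j else 0)
      (g := fun j => if j < i then a i j * x i * x j else 0)).symm)]
  refine Finset.sum_congr rfl fun i _ => Finset.sum_congr rfl fun j _ => ?_
  rcases lt_trichotomy i j with h | h | h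
  · rw [if_pos h, if_neg (Nat.lt_asymm h)]; ring
  · subst h
    rw [hdiag]
    simp
  · rw [if_neg (Nat.lt_asymm h), if_pos h]; ring

end Quad

section Main

variable {Ω : Type*} [MeasurableSpace Ω] {μ : Measure Ω} [IsProbabilityMeasure μ]
variable {X : ℕ → Ω → ℝ} {Φ : ℝ}

lemma var_bound (hXm : ∀ k, Measurable (X k)) (hX4 : ∀ k, MemLp (X k) 4 μ)
    (hΦ : ∀ k, ∫ ω, (X k ω) ^ 4 ∂μ ≤ Φ)
    (hmds : ∀ k : ℕ, μ[X k | natSigma X k] =ᵐ[μ] 0)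
    (p : ℕ) (a : ℕ → ℕ → ℝ) (hdiag : ∀ i, a i i = 0) :
    ∫ ω, (∑ i ∈ Finset.range p, ∑ j ∈ Finset.range p, a i j * X i ω * X j ω) ^ 2 ∂μ
      ≤ 16 * Φ * ∑ i ∈ Finset.range p, ∑ j ∈ Finset.range p, (a i j) ^ 2 := by
  have hΦ0 : 0 ≤ Φ := Phi_nonneg hX4 hΦ
  set c : ℕ → ℕ → ℝ := fun j i => a i j + a j i with hc
  have hY4 : ∀ j, MemLp (MS X (c j) j) 4 μ := fun j => memLp4_MS hX4 (c j) j
  have hZZ : ∀ j k : ℕ, Integrable (fun ω =>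
      (X j ω * MS X (c j) j ω) * (X k ω * MS X (c k) k ω)) μ := by
    intro j k
    exact integrable_mul4 (hX4 j) (hY4 j) (hX4 k) (hY4 k)
  -- rewrite the quadratic form
  have hrw : ∀ ω, (∑ i ∈ Finset.range p, ∑ j ∈ Finset.range p, a i j * X i ω * X j ω)
      = ∑ j ∈ Finset.range p, X j ω * MS X (c j) j ω := by
    intro ω
    rw [quad_identity p a hdiag (fun i => X i ω)]
    rfl
  -- expand the square of the sum
  have hsq : ∫ ω, (∑ i ∈ Finset.range p, ∑ j ∈ Finset.range p, a i j * X i ω * X j ω) ^ 2 ∂μ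
      = ∑ j ∈ Finset.range p, ∑ k ∈ Finset.range p,
          ∫ ω, (X j ω * MS X (c j) j ω) * (X k ω * MS X (c k) k ω) ∂μ := by
    have h1 : ∫ ω, (∑ i ∈ Finset.range p, ∑ j ∈ Finset.range p, a i j * X i ω * X j ω) ^ 2 ∂μ
        = ∫ ω, ∑ j ∈ Finset.range p, ∑ k ∈ Finset.range p,
            (X j ω * MS X (c j) j ω) * (X k ω * MS X (c k) k ω) ∂μ := by
      refine integral_fun_congr fun ω => ?_
      rw [hrw ω, sq, Finset.sum_mul_sum]
    rw [h1, integral_finset_sum _ (fun j _ => integrable_finset_sum _ (fun k _ => hZZ j k))]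
    exact Finset.sum_congr rfl fun j _ => integral_finset_sum _ (fun k _ => hZZ j k)
  -- cross terms vanish
  have hcross : ∀ j k : ℕ, j < k →
      ∫ ω, (X j ω * MS X (c j) j ω) * (X k ω * MS X (c k) k ω) ∂μ = 0 := by
    intro j k hjk
    have e : ∫ ω, (X j ω * MS X (c j) j ω) * (X k ω * MS X (c k) k ω) ∂μ
        = ∫ ω, (X j ω * MS X (c j) j ω * MS X (c k) k ω) * X k ω ∂μ :=
      integral_fun_congr fun ω => by ring
    rw [e]
    refine integral_mul_Xk_eq_zero hXm hmds k ?_ ?_ ((hX4 k).integrable (by norm_num))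
    · exact ((measurable_natSigma_X hjk).mul
        (measurable_natSigma_MS (c j) hjk.le)).mul (measurable_natSigma_MS (c k) le_rfl)
    · refine (integrable_mul4 (hX4 j) (hY4 j) (hY4 k) (hX4 k)).congr ?_
      filter_upwards with ω; ring
  -- diagonal terms
  have hdiagbound : ∀ j : ℕ,
      ∫ ω, (X j ω * MS X (c j) j ω) * (X j ω * MS X (c j) j ω) ∂μ
        ≤ 4 * Φ * ∑ i ∈ Finset.range j, (c j i) ^ 2 := by
    intro j
    set s : ℝ := ∑ i ∈ Finset.range j, (c j i) ^ 2 with hs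
    have hs0 : 0 ≤ s := Finset.sum_nonneg fun i _ => sq_nonneg _
    have hF2 : MemLp (fun ω => X j ω ^ 2) 2 μ := by
      have h := memLp2_mul (hX4 j) (hX4 j)
      have e : (fun ω => X j ω * X j ω) = fun ω => X j ω ^ 2 := by funext ω; ring
      rwa [e] at h
    have hG2 : MemLp (fun ω => MS X (c j) j ω ^ 2) 2 μ := by
      have h := memLp2_mul (hY4 j) (hY4 j)
      have e : (fun ω => MS X (c j) j ω * MS X (c j) j ω)
          = fun ω => MS X (c j) j ω ^ 2 := by funext ω; ring
      rwa [e] at h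
    have hcs := cs_nonneg hF2 hG2 (fun ω => sq_nonneg _) (fun ω => sq_nonneg _)
    have e1 : ∫ ω, (X j ω ^ 2) ^ 2 ∂μ = ∫ ω, X j ω ^ 4 ∂μ :=
      integral_fun_congr fun ω => by ring
    have e2 : ∫ ω, (MS X (c j) j ω ^ 2) ^ 2 ∂μ = ∫ ω, MS X (c j) j ω ^ 4 ∂μ :=
      integral_fun_congr fun ω => by ring
    rw [e1, e2] at hcs
    have hXb : Real.sqrt (∫ ω, X j ω ^ 4 ∂μ) ≤ Real.sqrt Φ := Real.sqrt_le_sqrt (hΦ j)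
    have hYb : Real.sqrt (∫ ω, MS X (c j) j ω ^ 4 ∂μ) ≤ 4 * Real.sqrt Φ * s := by
      have h1 := Real.sqrt_le_sqrt (fourth_moment_MS hXm hX4 hΦ hmds (c j) j)
      have h2 : Real.sqrt (16 * Φ * s ^ 2) = 4 * Real.sqrt Φ * s := by
        rw [show 16 * Φ * s ^ 2 = (4 * Real.sqrt Φ * s) ^ 2 by
          rw [mul_pow, mul_pow, Real.sq_sqrt hΦ0]; ring]
        exact Real.sqrt_sq (by positivity)
      rw [← hs] at h1
      linarith [h1, h2.le]
    have hmul : Real.sqrt (∫ ω, X j ω ^ 4 ∂μ) * Real.sqrt (∫ ω, MS X (c j) j ω ^ 4 ∂μ)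
        ≤ Real.sqrt Φ * (4 * Real.sqrt Φ * s) :=
      mul_le_mul hXb hYb (Real.sqrt_nonneg _) (Real.sqrt_nonneg _)
    have hΦΦ : Real.sqrt Φ * (4 * Real.sqrt Φ * s) = 4 * Φ * s := by
      rw [show Real.sqrt Φ * (4 * Real.sqrt Φ * s)
        = 4 * (Real.sqrt Φ * Real.sqrt Φ) * s by ring, Real.mul_self_sqrt hΦ0]
    have e0 : ∫ ω, (X j ω * MS X (c j) j ω) * (X j ω * MS X (c j) j ω) ∂μ
        = ∫ ω, (X j ω ^ 2) * (MS X (c j) j ω ^ 2) ∂μ :=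
      integral_fun_congr fun ω => by ring
    rw [e0]
    calc ∫ ω, (X j ω ^ 2) * (MS X (c j) j ω ^ 2) ∂μ
        ≤ Real.sqrt (∫ ω, X j ω ^ 4 ∂μ) * Real.sqrt (∫ ω, MS X (c j) j ω ^ 4 ∂μ) := hcs
      _ ≤ Real.sqrt Φ * (4 * Real.sqrt Φ * s) := hmul
      _ = 4 * Φ * s := hΦΦ
  -- put it together
  rw [hsq]
  have hdiagsum : ∑ j ∈ Finset.range p, ∑ k ∈ Finset.range p,
        ∫ ω, (X j ω * MS X (c j) j ω) * (X k ω * MS X (c k) k ω) ∂μ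
      = ∑ j ∈ Finset.range p,
        ∫ ω, (X j ω * MS X (c j) j ω) * (X j ω * MS X (c j) j ω) ∂μ := by
    refine Finset.sum_congr rfl fun j hj => ?_
    refine Finset.sum_eq_single j (fun k _ hkj => ?_) (fun h => absurd hj h)
    rcases lt_or_gt_of_ne hkj with h | h
    · have e : ∫ ω, (X j ω * MS X (c j) j ω) * (X k ω * MS X (c k) k ω) ∂μ
          = ∫ ω, (X k ω * MS X (c k) k ω) * (X j ω * MS X (c j) j ω) ∂μ :=
        integral_fun_congr fun ω => by ring
      rw [e]; exact hcross k j h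
    · exact hcross j k h
  rw [hdiagsum]
  have hsum1 : ∑ j ∈ Finset.range p,
        ∫ ω, (X j ω * MS X (c j) j ω) * (X j ω * MS X (c j) j ω) ∂μ
      ≤ ∑ j ∈ Finset.range p, 4 * Φ * ∑ i ∈ Finset.range j, (c j i) ^ 2 :=
    Finset.sum_le_sum fun j _ => hdiagbound j
  -- coefficient sum bound
  have hcoef : ∑ j ∈ Finset.range p, ∑ i ∈ Finset.range j, (c j i) ^ 2
      ≤ 4 * ∑ i ∈ Finset.range p, ∑ j ∈ Finset.range p, (a i j) ^ 2 := by
    have h1 : ∀ j ∈ Finset.range p, ∑ i ∈ Finset.range j, (c j i) ^ 2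
        ≤ ∑ i ∈ Finset.range p, (2 * (a i j) ^ 2 + 2 * (a j i) ^ 2) := by
      intro j hj
      have hsub : Finset.range j ⊆ Finset.range p :=
        Finset.range_subset_range.mpr (Finset.mem_range.mp hj).le
      calc ∑ i ∈ Finset.range j, (c j i) ^ 2
          ≤ ∑ i ∈ Finset.range j, (2 * (a i j) ^ 2 + 2 * (a j i) ^ 2) :=
            Finset.sum_le_sum fun i _ => by
              have : (c j i) ^ 2 = (a i j + a j i) ^ 2 := rfl
              rw [this]; nlinarith [sq_nonneg (a i j - a j i)]
        _ ≤ ∑ i ∈ Finset.range p, (2 * (a i j) ^ 2 + 2 * (a j i) ^ 2) :=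
            Finset.sum_le_sum_of_subset_of_nonneg hsub fun i _ _ => by positivity
    calc ∑ j ∈ Finset.range p, ∑ i ∈ Finset.range j, (c j i) ^ 2
        ≤ ∑ j ∈ Finset.range p, ∑ i ∈ Finset.range p,
            (2 * (a i j) ^ 2 + 2 * (a j i) ^ 2) := Finset.sum_le_sum h1
      _ = 4 * ∑ i ∈ Finset.range p, ∑ j ∈ Finset.range p, (a i j) ^ 2 := by
          rw [Finset.sum_congr rfl (fun j (_ : j ∈ Finset.range p) =>
            Finset.sum_add_distrib (s := Finset.range p)
              (f := fun i => 2 * (a i j) ^ 2) (g := fun i => 2 * (a j i) ^ 2)),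
            Finset.sum_add_distrib]
          have c1 : ∑ j ∈ Finset.range p, ∑ i ∈ Finset.range p, 2 * (a i j) ^ 2
              = ∑ i ∈ Finset.range p, ∑ j ∈ Finset.range p, 2 * (a i j) ^ 2 :=
            Finset.sum_comm
          rw [c1]
          have hS2 : 2 * ∑ i ∈ Finset.range p, ∑ j ∈ Finset.range p, (a i j) ^ 2
              = ∑ i ∈ Finset.range p, ∑ j ∈ Finset.range p, 2 * (a i j) ^ 2 := by
            rw [Finset.mul_sum]
            exact Finset.sum_congr rfl fun i _ => Finset.mul_sum _ _ _
          linarith [hS2]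
  calc ∑ j ∈ Finset.range p,
        ∫ ω, (X j ω * MS X (c j) j ω) * (X j ω * MS X (c j) j ω) ∂μ
      ≤ ∑ j ∈ Finset.range p, 4 * Φ * ∑ i ∈ Finset.range j, (c j i) ^ 2 := hsum1
    _ = 4 * Φ * ∑ j ∈ Finset.range p, ∑ i ∈ Finset.range j, (c j i) ^ 2 := by
        rw [Finset.mul_sum]
    _ ≤ 4 * Φ * (4 * ∑ i ∈ Finset.range p, ∑ j ∈ Finset.range p, (a i j) ^ 2) :=
        mul_le_mul_of_nonneg_left hcoef (by positivity)
    _ = 16 * Φ * ∑ i ∈ Finset.range p, ∑ j ∈ Finset.range p, (a i j) ^ 2 := by ring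

end Main

universe u

/-- For a martingale difference sequence (w.r.t. its natural filtration) with `E[X_k²] ≤ 1` and
fourth moments bounded by `Φ₀`, there is a universal constant `C > 0` such that for any `p × p`
matrix `A` with zero diagonal, `Var(X_pᵀ A X_p) ≤ C Φ₀ tr(A Aᵀ)`. -/
theorem variance_quadratic_form_martingale_differences :
    ∃ C : ℝ, 0 < C ∧
      ∀ (Ω : Type u) [MeasurableSpace Ω] (μ : Measure Ω) [IsProbabilityMeasure μ]
        (X : ℕ → Ω → ℝ) (Φ₀ : ℝ),
        (∀ k, Measurable (X k)) →
        (∀ k, MemLp (X k) 4 μ) →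
        (∀ k, ∫ ω, X k ω ∂μ = 0) →
        (∀ k, ∫ ω, (X k ω) ^ 2 ∂μ ≤ 1) →
        -- martingale difference property w.r.t. the natural filtration:
        -- `E[X_k | X_0, …, X_{k-1}] = 0` a.s. for every `k`
        (∀ k : ℕ,
          μ[X k | MeasurableSpace.comap (fun ω => (fun i : Fin k => X i ω))
              MeasurableSpace.pi] =ᵐ[μ] 0) →
        (∀ k, ∫ ω, (X k ω) ^ 4 ∂μ ≤ Φ₀) →
        ∀ (p : ℕ) (A : Matrix (Fin p) (Fin p) ℝ), 1 ≤ p →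
          (∀ i, A i i = 0) →
          variance' μ (fun ω => ∑ i, ∑ j, A i j * X i ω * X j ω) ≤
            C * Φ₀ * Matrix.trace (A * Aᵀ) := by
  refine ⟨16, by norm_num, ?_⟩
  intro Ω _ μ _ X Φ₀ hXm hX4 _ _ hmds hΦ p A _ hAdiag
  have hmds' : ∀ k : ℕ, μ[X k | natSigma X k] =ᵐ[μ] 0 := hmds
  -- extend the matrix to a function on ℕ
  set a : ℕ → ℕ → ℝ := fun i j =>
    if h : i < p ∧ j < p then A ⟨i, h.1⟩ ⟨j, h.2⟩ else 0 with ha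
  have hdiag : ∀ i, a i i = 0 := by
    intro i
    by_cases h : i < p ∧ i < p
    · simp only [ha, dif_pos h]
      exact hAdiag _
    · simp only [ha, dif_neg h]
  have haA : ∀ (i j : Fin p), a i j = A i j := by
    intro i j
    simp only [ha, dif_pos (And.intro i.isLt j.isLt)]
  -- rewrite the quadratic form as a range sum
  have hfun : (fun ω => ∑ i, ∑ j, A i j * X i ω * X j ω)
      = fun ω => ∑ i ∈ Finset.range p, ∑ j ∈ Finset.range p, a i j * X i ω * X j ω := by
    funext ω
    rw [show (∑ i, ∑ j, A i j * X (i : ℕ) ω * X (j : ℕ) ω)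
        = ∑ i : Fin p, ∑ j : Fin p, a (i : ℕ) (j : ℕ) * X (i : ℕ) ω * X (j : ℕ) ω from
      Finset.sum_congr rfl fun i _ => Finset.sum_congr rfl fun j _ => by rw [haA]]
    rw [Fin.sum_univ_eq_sum_range (fun i => ∑ j : Fin p, a i (j : ℕ) * X i ω * X (j : ℕ) ω) p]
    exact Finset.sum_congr rfl fun i _ =>
      Fin.sum_univ_eq_sum_range (fun j => a i j * X i ω * X j ω) p
  -- the trace as a range sum
  have htrace : Matrix.trace (A * Aᵀ)
      = ∑ i ∈ Finset.range p, ∑ j ∈ Finset.range p, (a i j) ^ 2 := by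
    have h1 : Matrix.trace (A * Aᵀ) = ∑ i : Fin p, ∑ j : Fin p, A i j * A i j := by
      simp [Matrix.trace, Matrix.mul_apply, Matrix.diag]
    rw [h1,
      show (∑ i : Fin p, ∑ j : Fin p, A i j * A i j)
        = ∑ i : Fin p, ∑ j : Fin p, (a (i : ℕ) (j : ℕ)) ^ 2 from
        Finset.sum_congr rfl fun i _ => Finset.sum_congr rfl fun j _ => by
          rw [haA]; ring,
      Fin.sum_univ_eq_sum_range (fun i => ∑ j : Fin p, (a i (j : ℕ)) ^ 2) p]
    exact Finset.sum_congr rfl fun i _ =>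
      Fin.sum_univ_eq_sum_range (fun j => (a i j) ^ 2) p
  rw [hfun, htrace]
  have hvar : variance' μ
      (fun ω => ∑ i ∈ Finset.range p, ∑ j ∈ Finset.range p, a i j * X i ω * X j ω)
      ≤ ∫ ω, (∑ i ∈ Finset.range p, ∑ j ∈ Finset.range p, a i j * X i ω * X j ω) ^ 2 ∂μ := by
    unfold variance'
    exact sub_le_self _ (sq_nonneg _)
  exact hvar.trans (var_bound hXm hX4 hΦ hmds' p a hdiag)
end
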